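/- arXiv:2408.05486 — 2 statements merged into one kernel-verified Lean document; each statement's English description precedes it below -/
import Mathlib

section
/- Let T_{p₁,…,p_ℓ} and T_{p'₁,…,p'_ℓ} be ℓ-dimensional torus CCs satisfying (1) p₁⋯p_ℓ = p'₁⋯p'_ℓ, (2) p_j ≥ 3 and p'_j ≥ 3 for all j, and (3) Σ_{j=1}^{ℓ} ⌊p_j/2⌋ ≠ Σ_{j=1}^{ℓ} ⌊p'_j/2⌋. Then the 𝒜_{0,1}-diameters of T_{p₁,…,p_ℓ} and T_{p'₁,…,p'_ℓ} are different, yet for every HOMP model M, M(T_{p₁,…,p_ℓ}) = M(T_{p'₁,…,p'_ℓ}). -/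
/-! Basic framework: combinatorial complexes, natural neighborhood functions,
CC coverings, Hasse graphs, and higher-order message-passing (HOMP) models. -/

namespace TDL

/-- The raw data of a combinatorial complex over an ambient node type `S`:
a set of cells (finite, nonempty subsets of nodes) and a rank function. -/
structure PreCC (S : Type*) where
  cells : Set (Finset S)
  rk : Finset S → ℕ

/-- A (featureless) combinatorial complex.  The node set is implicitly the set of
elements appearing in cells; every singleton of such a node is a cell of rank `0`,
cells are nonempty, there are finitely many cells, and the rank function is
monotone with respect to inclusion. -/
structure CC (S : Type*) extends PreCC S where
  cells_finite : cells.Finite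
  nonempty_of_mem : ∀ x ∈ cells, x.Nonempty
  singleton_mem : ∀ x ∈ cells, ∀ s ∈ x, ({s} : Finset S) ∈ cells
  rk_singleton : ∀ s : S, ({s} : Finset S) ∈ cells → rk {s} = 0
  rk_mono : ∀ x ∈ cells, ∀ y ∈ cells, x ⊆ y → rk x ≤ rk y

/-- Names of the natural neighborhood functions: `(r₁,r₂)`-adjacency,
coadjacency, incidence and co-incidence. -/
inductive NbhdKind : Type
  | adj (r₁ r₂ : ℕ)
  | coadj (r₁ r₂ : ℕ)
  | inc (r₁ r₂ : ℕ)
  | coinc (r₁ r₂ : ℕ)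
  deriving DecidableEq

/-- The two ranks mentioned by a neighborhood kind are bounded by `ℓ`. -/
def NbhdKind.bounded (ℓ : ℕ) : NbhdKind → Prop
  | .adj r₁ r₂ => r₁ ≤ ℓ ∧ r₂ ≤ ℓ
  | .coadj r₁ r₂ => r₁ ≤ ℓ ∧ r₂ ≤ ℓ
  | .inc r₁ r₂ => r₁ ≤ ℓ ∧ r₂ ≤ ℓ
  | .coinc r₁ r₂ => r₁ ≤ ℓ ∧ r₂ ≤ ℓ

namespace PreCC

variable {S : Type*}

/-- The `r`-skeleton: the set of cells of rank `r`. -/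
def skel (X : PreCC S) (r : ℕ) : Set (Finset S) := {x | x ∈ X.cells ∧ X.rk x = r}

/-- The natural neighborhood functions of a complex. -/
def nbhd (X : PreCC S) : NbhdKind → Finset S → Set (Finset S)
  | .adj r₁ r₂, x => {y | x ∈ X.skel r₁ ∧ y ∈ X.skel r₁ ∧ ∃ z ∈ X.skel r₂, x ⊆ z ∧ y ⊆ z}
  | .coadj r₁ r₂, x => {y | x ∈ X.skel r₁ ∧ y ∈ X.skel r₁ ∧ ∃ z ∈ X.skel r₂, z ⊆ x ∧ z ⊆ y}
  | .inc r₁ r₂, x => {y | x ∈ X.skel r₁ ∧ y ∈ X.skel r₂ ∧ x ⊆ y}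
  | .coinc r₁ r₂, x => {y | x ∈ X.skel r₁ ∧ y ∈ X.skel r₂ ∧ y ⊆ x}

/-- The Hasse graph of a complex: vertices are cells, and `x, y` are joined by an
edge whenever `x ⊆ y` and `rk x = rk y - 1` (or symmetrically). -/
def hasse (X : PreCC S) : SimpleGraph {x : Finset S // x ∈ X.cells} where
  Adj a b := (a.1 ⊆ b.1 ∧ X.rk a.1 + 1 = X.rk b.1) ∨ (b.1 ⊆ a.1 ∧ X.rk b.1 + 1 = X.rk a.1)
  symm := ⟨by
    rintro a b (h | h)
    · exact Or.inr h
    · exact Or.inl h⟩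
  loopless := ⟨by rintro a (⟨-, h⟩ | ⟨-, h⟩) <;> omega⟩

end PreCC

/-- `ρ` is a CC covering of `X` by `Xt`: it maps cells of `Xt` to cells of `X`
surjectively, preserves ranks, and is a local isomorphism with respect to every
natural neighborhood function. -/
structure IsCovering {S' S : Type*} (Xt : PreCC S') (X : PreCC S)
    (ρ : Finset S' → Finset S) : Prop where
  mem : ∀ x' ∈ Xt.cells, ρ x' ∈ X.cells
  surj : ∀ x ∈ X.cells, ∃ x' ∈ Xt.cells, ρ x' = x
  rank : ∀ x' ∈ Xt.cells, X.rk (ρ x') = Xt.rk x'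
  locBij : ∀ x' ∈ Xt.cells, ∀ N : NbhdKind, Set.BijOn ρ (Xt.nbhd N x') (X.nbhd N (ρ x'))

open Classical in
/-- The multiset underlying a finite set (junk value `0` for infinite sets). -/
noncomputable def setMultiset {α : Type*} (s : Set α) : Multiset α :=
  if h : s.Finite then h.toFinset.val else 0

/-- A higher-order message-passing (HOMP) model over a feature space `D`, for
featureless complexes of dimension at most `ℓ`: a number of layers `T`, an initial
constant feature, and, per layer, message functions (per neighborhood function and
rank), permutation-invariant aggregations (functions of multisets), a combination
operator over the family of neighborhood functions with ranks at most `ℓ`,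
activations, and a readout defined on multisets. -/
structure HOMP (D : Type*) (ℓ : ℕ) where
  T : ℕ
  init : D
  msg : ℕ → NbhdKind → ℕ → D → D → D
  agg : ℕ → NbhdKind → Multiset D → D
  comb : ℕ → ({N : NbhdKind // N.bounded ℓ} → D) → D
  act : ℕ → D → D
  readout : Multiset D → D

namespace HOMP

variable {D : Type*} {ℓ : ℕ} {S : Type*}

/-- The cell feature maps computed by a HOMP model on a complex:
`h⁰_x` is the initial constant, and
`h^{t+1}_x = β_t (⊗_N (⊕ {{ m_{t,N,rk x}(h^t_x, h^t_y) : y ∈ N(x) }}))`. -/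
noncomputable def feat (M : HOMP D ℓ) (X : PreCC S) : ℕ → Finset S → D
  | 0, _ => M.init
  | t + 1, x =>
      M.act t <| M.comb t fun N =>
        M.agg t N.1 <|
          (setMultiset (X.nbhd N.1 x)).map fun y =>
            M.msg t N.1 (X.rk x) (M.feat X t x) (M.feat X t y)

/-- The output of a HOMP model: the readout of the multiset of final features. -/
noncomputable def out (M : HOMP D ℓ) (X : PreCC S) : D :=
  M.readout <| (setMultiset X.cells).map fun x => M.feat X M.T x

end HOMP

end TDL

namespace TDL

/-- The cell `s_k` of the `ℓ`-dimensional torus: the set of nodes `s + k'` for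
`k' ≤ k`, with coordinatewise addition modulo `p j`. -/
def torusCell {ℓ : ℕ} (p : Fin ℓ → ℕ) (s : ∀ i, ZMod (p i)) (k : Fin ℓ → Bool) :
    Finset (∀ i, ZMod (p i)) :=
  (Finset.univ.filter fun k' : Fin ℓ → Bool => ∀ i, k' i = true → k i = true).image
    fun k' i => s i + if k' i then 1 else 0

/-- The number of ones in `k ∈ {0,1}^ℓ`, i.e. the rank of the cell `s_k`. -/
def torusRank {ℓ : ℕ} (k : Fin ℓ → Bool) : ℕ :=
  (Finset.univ.filter fun i => k i = true).card

/-- The `ℓ`-dimensional torus combinatorial complex `T_{p₁,…,p_ℓ}`: nodes are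
`ℤ/p₁ × ⋯ × ℤ/p_ℓ`, cells are the sets `s_k`, and the rank of `s_k` is
`k₁ + ⋯ + k_ℓ`. -/
noncomputable def torusPre {ℓ : ℕ} (p : Fin ℓ → ℕ) : PreCC (∀ i, ZMod (p i)) where
  cells := {x | ∃ s k, x = torusCell p s k}
  rk x := sInf {r | ∃ s k, x = torusCell p s k ∧ r = torusRank k}

end TDL

namespace TDL

/-- The graph on the `0`-cells of a complex in which two distinct `0`-cells are
adjacent iff some `1`-cell contains both. -/
def zeroGraph {S : Type*} (X : PreCC S) : SimpleGraph {x : Finset S // x ∈ X.skel 0} where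
  Adj u v := u ≠ v ∧ ∃ z ∈ X.skel 1, u.1 ⊆ z ∧ v.1 ⊆ z
  symm := ⟨by
    rintro u v ⟨hne, z, hz, h₁, h₂⟩
    exact ⟨hne.symm, z, hz, h₂, h₁⟩⟩
  loopless := ⟨by rintro u ⟨hne, -⟩; exact hne rfl⟩

/-- The cycle graph on `ℤ/n`: `i` and `j` are adjacent iff `i − j ≡ ±1`. -/
def cycGraph (n : ℕ) : SimpleGraph (ZMod n) where
  Adj i j := i ≠ j ∧ (i - j = 1 ∨ j - i = 1)
  symm := ⟨by rintro i j ⟨hne, h⟩; exact ⟨hne.symm, h.symm⟩⟩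
  loopless := ⟨by rintro i ⟨hne, -⟩; exact hne rfl⟩

end TDL
namespace TDL

section TorusBasics

variable {ℓ : ℕ} {p : Fin ℓ → ℕ}

lemma zmod_intCast_inj {m : ℕ} (hm : 3 ≤ m) {a b : ℤ}
    (hab : a - b < 3) (hba : b - a < 3) (h : ((a : ZMod m) = (b : ZMod m))) : a = b := by
  haveI : NeZero m := ⟨by omega⟩
  have hd : (m : ℤ) ∣ a - b := by
    have : ((a - b : ℤ) : ZMod m) = 0 := by push_cast; rw [h]; ring
    exact (ZMod.intCast_zmod_eq_zero_iff_dvd _ _).mp this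
  by_contra hne
  have h1 : 0 < |a - b| := abs_pos.mpr (sub_ne_zero.mpr hne)
  have h2 : (m : ℤ) ≤ |a - b| := Int.le_of_dvd h1 ((dvd_abs _ _).mpr hd)
  have h3 : |a - b| < 3 := abs_lt.mpr ⟨by omega, hab⟩
  have hm' : (3 : ℤ) ≤ (m : ℤ) := by exact_mod_cast hm
  omega

lemma zmod_one_ne_zero {m : ℕ} (hm : 3 ≤ m) : (1 : ZMod m) ≠ 0 := by
  intro h
  have : (1 : ℤ) = 0 := zmod_intCast_inj hm (by omega) (by omega) (by push_cast; exact h)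
  omega

lemma zmod_add_one_ne {m : ℕ} (hm : 3 ≤ m) (x : ZMod m) : x + 1 ≠ x := by
  intro h
  exact zmod_one_ne_zero hm (by linear_combination h)

lemma zmod_add_two_ne {m : ℕ} (hm : 3 ≤ m) (x : ZMod m) : x + 2 ≠ x := by
  intro h
  have : (2 : ℤ) = 0 := by
    refine zmod_intCast_inj hm (by omega) (by omega) ?_
    push_cast
    linear_combination h
  omega

lemma mem_torusCell {s a : ∀ i, ZMod (p i)} {k : Fin ℓ → Bool} :
    a ∈ torusCell p s k ↔ ∀ i, a i = s i ∨ (k i = true ∧ a i = s i + 1) := by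
  unfold torusCell
  simp only [Finset.mem_image, Finset.mem_filter, Finset.mem_univ, true_and]
  constructor
  · rintro ⟨k', hk', rfl⟩ i
    by_cases h : k' i
    · exact Or.inr ⟨hk' i h, by simp [h]⟩
    · simp only [Bool.not_eq_true] at h
      exact Or.inl (by simp [h])
  · intro h
    refine ⟨fun i => decide (a i ≠ s i), fun i hi => ?_, funext fun i => ?_⟩
    · simp only [decide_eq_true_eq] at hi
      rcases h i with h' | ⟨hk, _⟩
      · exact absurd h' hi
      · exact hk
    · by_cases h' : a i = s i
      · simp [h']
      · rcases h i with h'' | ⟨hk, h''⟩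
        · exact absurd h'' h'
        · have hd : decide (a i ≠ s i) = true := by simp [h']
          rw [show (fun i => decide (a i ≠ s i)) i = true from hd, if_pos rfl, h'']

lemma self_mem_torusCell {s : ∀ i, ZMod (p i)} {k : Fin ℓ → Bool} :
    s ∈ torusCell p s k := mem_torusCell.mpr fun i => Or.inl rfl

lemma torusCell_subset_iff (hp : ∀ i, 3 ≤ p i) {s v : ∀ i, ZMod (p i)} {k n : Fin ℓ → Bool} :
    torusCell p s k ⊆ torusCell p v n ↔
      ∀ i, (k i = true → n i = true ∧ s i = v i) ∧
           (k i = false → s i = v i ∨ (n i = true ∧ s i = v i + 1)) := by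
  constructor
  · intro h i
    have hs := mem_torusCell.mp (h self_mem_torusCell) i
    constructor
    · intro hk
      have hmem : Function.update s i (s i + 1) ∈ torusCell p s k := by
        refine mem_torusCell.mpr fun j => ?_
        by_cases hj : j = i
        · subst hj; exact Or.inr ⟨hk, by simp⟩
        · exact Or.inl (Function.update_of_ne hj _ _)
      have h2 := mem_torusCell.mp (h hmem) i
      rw [Function.update_self] at h2
      rcases hs with hs | ⟨hn, hs⟩ <;> rcases h2 with h2 | ⟨hn2, h2⟩
      · exact absurd (hs ▸ h2) (zmod_add_one_ne (hp i) _)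
      · exact ⟨hn2, hs⟩
      · exfalso
        apply zmod_add_two_ne (hp i) (v i)
        have : v i + 1 + 1 = v i := by rw [← hs, h2]
        linear_combination this
      · exfalso
        have hsv : s i = v i := by linear_combination h2
        rw [hsv] at hs
        exact zmod_add_one_ne (hp i) (v i) hs.symm
    · intro _; exact hs
  · intro h a ha
    refine mem_torusCell.mpr fun i => ?_
    rcases mem_torusCell.mp ha i with ha' | ⟨hk, ha'⟩
    · by_cases hk : k i = true
      · exact Or.inl (ha'.trans ((h i).1 hk).2)
      · rcases (h i).2 (by simpa using hk) with h' | ⟨hn, h'⟩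
        · exact Or.inl (ha'.trans h')
        · exact Or.inr ⟨hn, ha'.trans h'⟩
    · obtain ⟨hn, hsv⟩ := (h i).1 hk
      exact Or.inr ⟨hn, by rw [ha', hsv]⟩

lemma torusCell_inj (hp : ∀ i, 3 ≤ p i) {s v : ∀ i, ZMod (p i)} {k n : Fin ℓ → Bool}
    (h : torusCell p s k = torusCell p v n) : s = v ∧ k = n := by
  have h1 := (torusCell_subset_iff hp).mp h.le
  have h2 := (torusCell_subset_iff hp).mp h.ge
  have hkn : k = n := by
    funext i
    rcases hk : k i with _ | _ <;> rcases hn : n i with _ | _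
    · rfl
    · exact absurd (((h2 i).1 hn).1) (by simp [hk])
    · exact absurd (((h1 i).1 hk).1) (by simp [hn])
    · rfl
  refine ⟨funext fun i => ?_, hkn⟩
  by_cases hk : k i = true
  · exact ((h1 i).1 hk).2
  · have hk' : k i = false := by simpa using hk
    rcases (h1 i).2 hk' with h' | ⟨hn, _⟩
    · exact h'
    · rw [← hkn] at hn; exact absurd hn (by simp [hk'])

lemma torusCell_mem_cells {s : ∀ i, ZMod (p i)} {k : Fin ℓ → Bool} :
    torusCell p s k ∈ (torusPre p).cells := ⟨s, k, rfl⟩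

lemma rk_torusCell (hp : ∀ i, 3 ≤ p i) {s : ∀ i, ZMod (p i)} {k : Fin ℓ → Bool} :
    (torusPre p).rk (torusCell p s k) = torusRank k := by
  show sInf _ = _
  have : {r | ∃ s' k', torusCell p s k = torusCell p s' k' ∧ r = torusRank k'} = {torusRank k} := by
    ext r
    constructor
    · rintro ⟨s', k', hc, rfl⟩
      rw [(torusCell_inj hp hc).2]
      rfl
    · rintro rfl
      exact ⟨s, k, rfl, rfl⟩
  rw [this, csInf_singleton]

lemma mem_skel_iff (hp : ∀ i, 3 ≤ p i) {x : Finset (∀ i, ZMod (p i))} {r : ℕ} :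
    x ∈ (torusPre p).skel r ↔ ∃ s k, x = torusCell p s k ∧ torusRank k = r := by
  constructor
  · rintro ⟨⟨s, k, rfl⟩, hr⟩
    exact ⟨s, k, rfl, by rw [← rk_torusCell hp (s := s) (k := k)]; exact hr⟩
  · rintro ⟨s, k, rfl, hr⟩
    exact ⟨⟨s, k, rfl⟩, by rw [rk_torusCell hp]; exact hr⟩

end TorusBasics

end TDL
namespace TDL

/-- Per-coordinate (integer) condition for containment of torus cells given by
offsets relative to a common base point. -/
def ICond (n : Bool) (a : ℤ) (m : Bool) (b : ℤ) : Prop :=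
  (n = true → m = true ∧ a = b) ∧ (n = false → a = b ∨ (m = true ∧ a = b + 1))

/-- The cell at integer offset `q.2` from `s`, with support `q.1`. -/
def paramCell {ℓ : ℕ} (p : Fin ℓ → ℕ) (s : ∀ i, ZMod (p i))
    (q : (Fin ℓ → Bool) × (Fin ℓ → ℤ)) : Finset (∀ i, ZMod (p i)) :=
  torusCell p (fun i => s i + ((q.2 i : ℤ) : ZMod (p i))) q.1

/-- `p`-independent parameter sets for the natural neighborhoods of a torus cell
with support `k`. -/
def nbhdParam (ℓ : ℕ) : NbhdKind → (Fin ℓ → Bool) → Set ((Fin ℓ → Bool) × (Fin ℓ → ℤ))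
  | .inc r₁ r₂, k => {q | torusRank k = r₁ ∧ torusRank q.1 = r₂ ∧
      (∀ i, q.2 i = 0 ∨ q.2 i = -1) ∧ ∀ i, ICond (k i) 0 (q.1 i) (q.2 i)}
  | .coinc r₁ r₂, k => {q | torusRank k = r₁ ∧ torusRank q.1 = r₂ ∧
      (∀ i, q.2 i = 0 ∨ q.2 i = 1) ∧ ∀ i, ICond (q.1 i) (q.2 i) (k i) 0}
  | .adj r₁ r₂, k => {q | torusRank k = r₁ ∧ torusRank q.1 = r₁ ∧
      ∃ (m : Fin ℓ → Bool) (o' : Fin ℓ → ℤ), torusRank m = r₂ ∧ (∀ i, o' i = 0 ∨ o' i = -1) ∧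
        (∀ i, q.2 i = o' i ∨ q.2 i = o' i + 1) ∧
        (∀ i, ICond (k i) 0 (m i) (o' i)) ∧ (∀ i, ICond (q.1 i) (q.2 i) (m i) (o' i))}
  | .coadj r₁ r₂, k => {q | torusRank k = r₁ ∧ torusRank q.1 = r₁ ∧
      ∃ (m : Fin ℓ → Bool) (o' : Fin ℓ → ℤ), torusRank m = r₂ ∧ (∀ i, o' i = 0 ∨ o' i = 1) ∧
        (∀ i, q.2 i = o' i ∨ q.2 i = o' i - 1) ∧
        (∀ i, ICond (m i) (o' i) (k i) 0) ∧ (∀ i, ICond (m i) (o' i) (q.1 i) (q.2 i))}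

section ParamLemmas

variable {ℓ : ℕ} {p : Fin ℓ → ℕ}

lemma torusCell_eq_paramCell_zero {s : ∀ i, ZMod (p i)} {k : Fin ℓ → Bool} :
    torusCell p s k = paramCell p s (k, fun _ => 0) := by
  unfold paramCell
  congr 1
  funext i
  simp

/-- From an integer `ICond`, containment of the corresponding cells. -/
lemma paramCell_subset_of_ICond (hp : ∀ i, 3 ≤ p i) {s : ∀ i, ZMod (p i)}
    {n m : Fin ℓ → Bool} {o o' : Fin ℓ → ℤ} (h : ∀ i, ICond (n i) (o i) (m i) (o' i)) :
    paramCell p s (n, o) ⊆ paramCell p s (m, o') := by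
  refine (torusCell_subset_iff hp).mpr fun i => ?_
  dsimp only
  constructor
  · intro hn
    obtain ⟨hm, he⟩ := (h i).1 hn
    exact ⟨hm, by rw [he]⟩
  · intro hn
    rcases (h i).2 hn with he | ⟨hm, he⟩
    · exact Or.inl (by rw [he])
    · refine Or.inr ⟨hm, ?_⟩
      rw [he]
      push_cast
      ring

/-- Extract the offset of a supercell. -/
lemma exists_upper_offset (hp : ∀ i, 3 ≤ p i) {s : ∀ i, ZMod (p i)}
    {k m : Fin ℓ → Bool} {o : Fin ℓ → ℤ} {v : ∀ i, ZMod (p i)}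
    (hsub : paramCell p s (k, o) ⊆ torusCell p v m) :
    ∃ o' : Fin ℓ → ℤ, torusCell p v m = paramCell p s (m, o') ∧
      (∀ i, o' i = o i ∨ o' i = o i - 1) ∧ ∀ i, ICond (k i) (o i) (m i) (o' i) := by
  have H := (torusCell_subset_iff hp).mp hsub
  simp only at H
  classical
  refine ⟨fun i => if v i = s i + ((o i : ℤ) : ZMod (p i)) then o i else o i - 1, ?_, ?_, ?_⟩
  · unfold paramCell
    congr 1
    funext i
    dsimp only
    by_cases hv : v i = s i + ((o i : ℤ) : ZMod (p i))
    · rw [if_pos hv]; exact hv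
    · rw [if_neg hv]
      rcases Bool.eq_false_or_eq_true (k i) with hk | hk
      · exact absurd ((H i).1 hk).2.symm hv
      · rcases (H i).2 hk with he | ⟨_, he⟩
        · exact absurd he.symm hv
        · have hx : v i = s i + (o i : ZMod (p i)) - 1 := by linear_combination -he
          rw [hx]; push_cast; ring
  · intro i
    dsimp only
    by_cases hv : v i = s i + ((o i : ℤ) : ZMod (p i))
    · rw [if_pos hv]; exact Or.inl rfl
    · rw [if_neg hv]; exact Or.inr rfl
  · intro i
    constructor
    · intro hk
      obtain ⟨hm, he⟩ := (H i).1 hk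
      exact ⟨hm, by dsimp only; rw [if_pos he.symm]⟩
    · intro hk
      rcases (H i).2 hk with he | ⟨hm, he⟩
      · exact Or.inl (by dsimp only; rw [if_pos he.symm])
      · have hv : ¬ v i = s i + ((o i : ℤ) : ZMod (p i)) := by
          intro hv
          rw [hv] at he
          exact zmod_add_one_ne (hp i) _ he.symm
        refine Or.inr ⟨hm, ?_⟩
        dsimp only
        rw [if_neg hv]
        ring

/-- Extract the offset of a subcell. -/
lemma exists_lower_offset (hp : ∀ i, 3 ≤ p i) {s : ∀ i, ZMod (p i)}
    {k n : Fin ℓ → Bool} {o : Fin ℓ → ℤ} {v : ∀ i, ZMod (p i)}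
    (hsub : torusCell p v n ⊆ paramCell p s (k, o)) :
    ∃ o'' : Fin ℓ → ℤ, torusCell p v n = paramCell p s (n, o'') ∧
      (∀ i, o'' i = o i ∨ o'' i = o i + 1) ∧ ∀ i, ICond (n i) (o'' i) (k i) (o i) := by
  have H := (torusCell_subset_iff hp).mp hsub
  simp only at H
  classical
  refine ⟨fun i => if v i = s i + ((o i : ℤ) : ZMod (p i)) then o i else o i + 1, ?_, ?_, ?_⟩
  · unfold paramCell
    congr 1
    funext i
    dsimp only
    by_cases hv : v i = s i + ((o i : ℤ) : ZMod (p i))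
    · rw [if_pos hv]; exact hv
    · rw [if_neg hv]
      rcases Bool.eq_false_or_eq_true (n i) with hn | hn
      · exact absurd ((H i).1 hn).2 hv
      · rcases (H i).2 hn with he | ⟨_, he⟩
        · exact absurd he hv
        · rw [he]; push_cast; ring
  · intro i
    dsimp only
    by_cases hv : v i = s i + ((o i : ℤ) : ZMod (p i))
    · rw [if_pos hv]; exact Or.inl rfl
    · rw [if_neg hv]; exact Or.inr rfl
  · intro i
    constructor
    · intro hn
      obtain ⟨hk, he⟩ := (H i).1 hn
      exact ⟨hk, by dsimp only; rw [if_pos he]⟩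
    · intro hn
      rcases (H i).2 hn with he | ⟨hk, he⟩
      · exact Or.inl (by dsimp only; rw [if_pos he])
      · have hv : ¬ v i = s i + ((o i : ℤ) : ZMod (p i)) := by
          intro hv
          rw [hv] at he
          exact zmod_add_one_ne (hp i) _ he.symm
        refine Or.inr ⟨hk, ?_⟩
        dsimp only
        rw [if_neg hv]

lemma paramCell_injOn (hp : ∀ i, 3 ≤ p i) (s : ∀ i, ZMod (p i)) :
    Set.InjOn (paramCell p s) {q | ∀ i, -1 ≤ q.2 i ∧ q.2 i ≤ 1} := by
  intro q₁ h₁ q₂ h₂ h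
  obtain ⟨hs, hk⟩ := torusCell_inj hp h
  have ho : q₁.2 = q₂.2 := by
    funext i
    have hcast : ((q₁.2 i : ℤ) : ZMod (p i)) = ((q₂.2 i : ℤ) : ZMod (p i)) := by
      have := congrFun hs i
      simpa using this
    refine zmod_intCast_inj (hp i) ?_ ?_ hcast
    · have a := (h₁ i).2; have b := (h₂ i).1; omega
    · have a := (h₂ i).2; have b := (h₁ i).1; omega
  exact Prod.ext hk ho

lemma nbhdParam_bounds {ℓ : ℕ} (N : NbhdKind) (k : Fin ℓ → Bool) :
    nbhdParam ℓ N k ⊆ {q | ∀ i, -1 ≤ q.2 i ∧ q.2 i ≤ 1} := by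
  rcases N with ⟨r₁, r₂⟩ | ⟨r₁, r₂⟩ | ⟨r₁, r₂⟩ | ⟨r₁, r₂⟩
  · rintro ⟨n, o⟩ ⟨-, -, m, o', -, ho', ho, -, -⟩ i
    rcases ho i with h | h <;> rcases ho' i with h' | h' <;> omega
  · rintro ⟨n, o⟩ ⟨-, -, m, o', -, ho', ho, -, -⟩ i
    rcases ho i with h | h <;> rcases ho' i with h' | h' <;> omega
  · rintro ⟨n, o⟩ ⟨-, -, ho, -⟩ i
    rcases ho i with h | h <;> omega
  · rintro ⟨n, o⟩ ⟨-, -, ho, -⟩ i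
    rcases ho i with h | h <;> omega

lemma nbhdParam_finite {ℓ : ℕ} (N : NbhdKind) (k : Fin ℓ → Bool) :
    (nbhdParam ℓ N k).Finite := by
  refine Set.Finite.subset (Set.Finite.prod Set.finite_univ
    (Set.Finite.pi (t := fun _ : Fin ℓ => Set.Icc (-1 : ℤ) 1) fun _ => Set.finite_Icc _ _)) ?_
  intro q hq
  have := nbhdParam_bounds N k hq
  exact ⟨Set.mem_univ _, fun i _ => Set.mem_Icc.mpr (this i)⟩

end ParamLemmas

end TDL
namespace TDL

section NbhdChar

variable {ℓ : ℕ} {p : Fin ℓ → ℕ}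

lemma torusCell_mem_skel_iff (hp : ∀ i, 3 ≤ p i) {s : ∀ i, ZMod (p i)} {k : Fin ℓ → Bool}
    {r : ℕ} : torusCell p s k ∈ (torusPre p).skel r ↔ torusRank k = r := by
  rw [mem_skel_iff hp]
  constructor
  · rintro ⟨s', k', heq, hr⟩
    rw [(torusCell_inj hp heq).2]
    exact hr
  · intro h
    exact ⟨s, k, rfl, h⟩

lemma nbhd_eq_param (hp : ∀ i, 3 ≤ p i) (N : NbhdKind) (s : ∀ i, ZMod (p i))
    (k : Fin ℓ → Bool) :
    (torusPre p).nbhd N (torusCell p s k) = paramCell p s '' nbhdParam ℓ N k := by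
  have fix1 : ∀ o' : Fin ℓ → ℤ, (∀ i, o' i = (fun _ => (0:ℤ)) i ∨ o' i = (fun _ => (0:ℤ)) i - 1) →
      ∀ i, o' i = 0 ∨ o' i = -1 := by
    intro o' h i; have h' := h i; dsimp only at h'; omega
  have fix2 : ∀ o' : Fin ℓ → ℤ, (∀ i, o' i = (fun _ => (0:ℤ)) i ∨ o' i = (fun _ => (0:ℤ)) i + 1) →
      ∀ i, o' i = 0 ∨ o' i = 1 := by
    intro o' h i; have h' := h i; dsimp only at h'; omega
  rcases N with ⟨r₁, r₂⟩ | ⟨r₁, r₂⟩ | ⟨r₁, r₂⟩ | ⟨r₁, r₂⟩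
  · -- adjacency
    ext y
    simp only [PreCC.nbhd, Set.mem_setOf_eq, Set.mem_image]
    constructor
    · rintro ⟨hx, hy, z, hz, hxz, hyz⟩
      have hk1 : torusRank k = r₁ := (torusCell_mem_skel_iff hp).mp hx
      obtain ⟨w, m, rfl, hm⟩ := (mem_skel_iff hp).mp hz
      rw [torusCell_eq_paramCell_zero (s := s) (k := k)] at hxz
      obtain ⟨ow, hwcell, hwrange, hwIC⟩ := exists_upper_offset hp hxz
      obtain ⟨v, n, rfl, hn⟩ := (mem_skel_iff hp).mp hy
      rw [hwcell] at hyz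
      obtain ⟨ov, hvcell, hvrange, hvIC⟩ := exists_lower_offset hp hyz
      exact ⟨(n, ov), ⟨hk1, hn, m, ow, hm, fix1 ow hwrange, hvrange, hwIC, hvIC⟩, hvcell.symm⟩
    · rintro ⟨⟨n, o⟩, ⟨hk1, hn1, m, o', hm2, ho', ho, hIC1, hIC2⟩, rfl⟩
      refine ⟨(torusCell_mem_skel_iff hp).mpr hk1, ?_, paramCell p s (m, o'), ?_, ?_, ?_⟩
      · exact (torusCell_mem_skel_iff hp).mpr hn1
      · exact (torusCell_mem_skel_iff hp).mpr hm2
      · rw [torusCell_eq_paramCell_zero]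
        exact paramCell_subset_of_ICond hp hIC1
      · exact paramCell_subset_of_ICond hp hIC2
  · -- coadjacency
    ext y
    simp only [PreCC.nbhd, Set.mem_setOf_eq, Set.mem_image]
    constructor
    · rintro ⟨hx, hy, z, hz, hzx, hzy⟩
      have hk1 : torusRank k = r₁ := (torusCell_mem_skel_iff hp).mp hx
      obtain ⟨w, m, rfl, hm⟩ := (mem_skel_iff hp).mp hz
      rw [torusCell_eq_paramCell_zero (s := s) (k := k)] at hzx
      obtain ⟨ow, hwcell, hwrange, hwIC⟩ := exists_lower_offset hp hzx
      obtain ⟨v, n, rfl, hn⟩ := (mem_skel_iff hp).mp hy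
      rw [hwcell] at hzy
      obtain ⟨ov, hvcell, hvrange, hvIC⟩ := exists_upper_offset hp hzy
      exact ⟨(n, ov), ⟨hk1, hn, m, ow, hm, fix2 ow hwrange, hvrange, hwIC, hvIC⟩, hvcell.symm⟩
    · rintro ⟨⟨n, o⟩, ⟨hk1, hn1, m, o', hm2, ho', ho, hIC1, hIC2⟩, rfl⟩
      refine ⟨(torusCell_mem_skel_iff hp).mpr hk1, ?_, paramCell p s (m, o'), ?_, ?_, ?_⟩
      · exact (torusCell_mem_skel_iff hp).mpr hn1
      · exact (torusCell_mem_skel_iff hp).mpr hm2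
      · rw [torusCell_eq_paramCell_zero]
        exact paramCell_subset_of_ICond hp hIC1
      · exact paramCell_subset_of_ICond hp hIC2
  · -- incidence
    ext y
    simp only [PreCC.nbhd, Set.mem_setOf_eq, Set.mem_image]
    constructor
    · rintro ⟨hx, hy, hsub⟩
      have hk1 : torusRank k = r₁ := (torusCell_mem_skel_iff hp).mp hx
      obtain ⟨v, n, rfl, hn⟩ := (mem_skel_iff hp).mp hy
      rw [torusCell_eq_paramCell_zero (s := s) (k := k)] at hsub
      obtain ⟨o', hcell, hrange, hIC⟩ := exists_upper_offset hp hsub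
      exact ⟨(n, o'), ⟨hk1, hn, fix1 o' hrange, hIC⟩, hcell.symm⟩
    · rintro ⟨⟨n, o⟩, ⟨hk1, hn2, hrange, hIC⟩, rfl⟩
      refine ⟨(torusCell_mem_skel_iff hp).mpr hk1, (torusCell_mem_skel_iff hp).mpr hn2, ?_⟩
      rw [torusCell_eq_paramCell_zero]
      exact paramCell_subset_of_ICond hp hIC
  · -- coincidence
    ext y
    simp only [PreCC.nbhd, Set.mem_setOf_eq, Set.mem_image]
    constructor
    · rintro ⟨hx, hy, hsub⟩
      have hk1 : torusRank k = r₁ := (torusCell_mem_skel_iff hp).mp hx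
      obtain ⟨v, n, rfl, hn⟩ := (mem_skel_iff hp).mp hy
      rw [torusCell_eq_paramCell_zero (s := s) (k := k)] at hsub
      obtain ⟨o', hcell, hrange, hIC⟩ := exists_lower_offset hp hsub
      exact ⟨(n, o'), ⟨hk1, hn, fix2 o' hrange, hIC⟩, hcell.symm⟩
    · rintro ⟨⟨n, o⟩, ⟨hk1, hn2, hrange, hIC⟩, rfl⟩
      refine ⟨(torusCell_mem_skel_iff hp).mpr hk1, (torusCell_mem_skel_iff hp).mpr hn2, ?_⟩
      rw [torusCell_eq_paramCell_zero]
      exact paramCell_subset_of_ICond hp hIC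

end NbhdChar

end TDL
namespace TDL

lemma mem_setMultiset {α : Type*} {s : Set α} (hs : s.Finite) {a : α} :
    a ∈ setMultiset s ↔ a ∈ s := by
  unfold setMultiset
  rw [dif_pos hs]
  exact ⟨fun h => hs.mem_toFinset.mp h, fun h => hs.mem_toFinset.mpr h⟩

lemma setMultiset_image {α β : Type*} {f : α → β} {s : Set α} (hs : s.Finite)
    (hf : Set.InjOn f s) : setMultiset (f '' s) = (setMultiset s).map f := by
  classical
  unfold setMultiset
  rw [dif_pos (hs.image f), dif_pos hs]
  rw [Set.Finite.toFinset_image f hs (hs.image f)]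
  rw [Finset.image_val]
  apply Multiset.dedup_eq_self.mpr
  refine Multiset.Nodup.map_on ?_ hs.toFinset.nodup
  intro x hx y hy hxy
  exact hf (hs.mem_toFinset.mp hx) (hs.mem_toFinset.mp hy) hxy

lemma feat_torus_eq {D : Type*} {ℓ' : ℕ} (M : HOMP D ℓ') {ℓ : ℕ} {p p' : Fin ℓ → ℕ}
    (hp : ∀ i, 3 ≤ p i) (hp' : ∀ i, 3 ≤ p' i) :
    ∀ (t : ℕ) (k : Fin ℓ → Bool) (s : ∀ i, ZMod (p i)) (s' : ∀ i, ZMod (p' i)),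
      M.feat (torusPre p) t (torusCell p s k) = M.feat (torusPre p') t (torusCell p' s' k) := by
  intro t
  induction t with
  | zero => intro k s s'; rfl
  | succ t ih =>
    intro k s s'
    simp only [HOMP.feat]
    congr 1
    congr 1
    funext N
    congr 1
    rw [nbhd_eq_param hp N.1 s k, nbhd_eq_param hp' N.1 s' k]
    rw [setMultiset_image (nbhdParam_finite N.1 k)
      ((paramCell_injOn hp s).mono (nbhdParam_bounds N.1 k))]
    rw [setMultiset_image (nbhdParam_finite N.1 k)
      ((paramCell_injOn hp' s').mono (nbhdParam_bounds N.1 k))]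
    rw [Multiset.map_map, Multiset.map_map]
    apply Multiset.map_congr rfl
    intro q hq
    simp only [Function.comp_apply]
    rw [rk_torusCell hp, rk_torusCell hp']
    rw [ih k s s']
    show M.msg t N.1 (torusRank k) _
        (M.feat (torusPre p) t (torusCell p (fun i => s i + ((q.2 i : ℤ) : ZMod (p i))) q.1)) = _
    rw [ih q.1 (fun i => s i + ((q.2 i : ℤ) : ZMod (p i)))
      (fun i => s' i + ((q.2 i : ℤ) : ZMod (p' i)))]
    rfl

lemma out_torus_eq {D : Type*} {ℓ' : ℕ} (M : HOMP D ℓ') {ℓ : ℕ} {p p' : Fin ℓ → ℕ}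
    (hp : ∀ i, 3 ≤ p i) (hp' : ∀ i, 3 ≤ p' i) (hcard : ∏ i, p i = ∏ i, p' i) :
    M.out (torusPre p) = M.out (torusPre p') := by
  haveI h1 : ∀ i, NeZero (p i) := fun i => ⟨by have := hp i; omega⟩
  haveI h2 : ∀ i, NeZero (p' i) := fun i => ⟨by have := hp' i; omega⟩
  have hcards : Fintype.card (∀ i, ZMod (p i)) = Fintype.card (∀ i, ZMod (p' i)) := by
    rw [Fintype.card_pi, Fintype.card_pi]
    simp only [ZMod.card]
    exact hcard
  let e : (∀ i, ZMod (p i)) ≃ (∀ i, ZMod (p' i)) := Fintype.equivOfCardEq hcards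
  let f : (Fin ℓ → Bool) × (∀ i, ZMod (p i)) → Finset (∀ i, ZMod (p i)) :=
    fun q => torusCell p q.2 q.1
  let f' : (Fin ℓ → Bool) × (∀ i, ZMod (p' i)) → Finset (∀ i, ZMod (p' i)) :=
    fun q => torusCell p' q.2 q.1
  have hc : (torusPre p).cells = f '' Set.univ := by
    ext x
    constructor
    · rintro ⟨s, k, rfl⟩; exact ⟨(k, s), Set.mem_univ _, rfl⟩
    · rintro ⟨⟨k, s⟩, -, rfl⟩; exact ⟨s, k, rfl⟩
  have hc' : (torusPre p').cells = f' '' Set.univ := by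
    ext x
    constructor
    · rintro ⟨s, k, rfl⟩; exact ⟨(k, s), Set.mem_univ _, rfl⟩
    · rintro ⟨⟨k, s⟩, -, rfl⟩; exact ⟨s, k, rfl⟩
  have hinj : Set.InjOn f Set.univ := by
    rintro q₁ - q₂ - h
    obtain ⟨hs, hk⟩ := torusCell_inj hp h
    exact Prod.ext hk hs
  have hinj' : Set.InjOn f' Set.univ := by
    rintro q₁ - q₂ - h
    obtain ⟨hs, hk⟩ := torusCell_inj hp' h
    exact Prod.ext hk hs
  let E : (Fin ℓ → Bool) × (∀ i, ZMod (p i)) ≃ (Fin ℓ → Bool) × (∀ i, ZMod (p' i)) :=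
    Equiv.prodCongr (Equiv.refl _) e
  have huniv : (Set.univ : Set ((Fin ℓ → Bool) × (∀ i, ZMod (p' i)))) = E '' Set.univ := by
    rw [Set.image_univ, Equiv.range_eq_univ]
  unfold HOMP.out
  congr 1
  rw [hc, hc']
  rw [setMultiset_image Set.finite_univ hinj, setMultiset_image Set.finite_univ hinj']
  rw [huniv, setMultiset_image Set.finite_univ (E.injective.injOn)]
  rw [Multiset.map_map, Multiset.map_map, Multiset.map_map]
  apply Multiset.map_congr rfl
  intro q _
  simp only [Function.comp_apply]
  exact feat_torus_eq M hp hp' M.T q.1 q.2 (e q.2)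

end TDL
namespace TDL

section ZeroOne

variable {ℓ : ℕ} {p : Fin ℓ → ℕ}

lemma torusRank_false : torusRank (fun _ : Fin ℓ => false) = 0 := by
  unfold torusRank
  rw [Finset.card_eq_zero, Finset.filter_eq_empty_iff]
  intro i _
  simp

lemma torusRank_single (j : Fin ℓ) : torusRank (fun i => decide (i = j)) = 1 := by
  unfold torusRank
  rw [Finset.card_eq_one]
  exact ⟨j, by ext i; simp⟩

lemma torusCell_false (s : ∀ i, ZMod (p i)) :
    torusCell p s (fun _ => false) = {s} := by
  ext a
  rw [mem_torusCell, Finset.mem_singleton]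
  constructor
  · intro h
    funext i
    rcases h i with h' | ⟨h', -⟩
    · exact h'
    · exact absurd h' (by simp)
  · rintro rfl i
    exact Or.inl rfl

lemma torusCell_single (hp : ∀ i, 3 ≤ p i) (s : ∀ i, ZMod (p i)) (j : Fin ℓ) :
    torusCell p s (fun i => decide (i = j)) = {s, Function.update s j (s j + 1)} := by
  ext a
  rw [mem_torusCell, Finset.mem_insert, Finset.mem_singleton]
  constructor
  · intro h
    by_cases hj : a j = s j
    · left
      funext i
      by_cases hij : i = j
      · subst hij; exact hj
      · rcases h i with h' | ⟨h', -⟩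
        · exact h'
        · exact absurd h' (by simp [hij])
    · right
      funext i
      by_cases hij : i = j
      · subst hij
        rcases h i with h' | ⟨-, h'⟩
        · exact absurd h' hj
        · rw [h', Function.update_self]
      · rw [Function.update_of_ne hij]
        rcases h i with h' | ⟨h', -⟩
        · exact h'
        · exact absurd h' (by simp [hij])
  · rintro (rfl | rfl) i
    · exact Or.inl rfl
    · by_cases hij : i = j
      · subst hij
        exact Or.inr ⟨by simp, by rw [Function.update_self]⟩
      · exact Or.inl (Function.update_of_ne hij _ _)

lemma mem_skel_zero_iff (hp : ∀ i, 3 ≤ p i) {x : Finset (∀ i, ZMod (p i))} :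
    x ∈ (torusPre p).skel 0 ↔ ∃ s, x = {s} := by
  rw [mem_skel_iff hp]
  constructor
  · rintro ⟨s, k, rfl, hk⟩
    have : k = fun _ => false := by
      funext i
      by_contra hi
      have hi' : k i = true := by simpa using hi
      have : 0 < torusRank k := Finset.card_pos.mpr ⟨i, by simp [hi']⟩
      omega
    rw [this, torusCell_false]
    exact ⟨s, rfl⟩
  · rintro ⟨s, rfl⟩
    exact ⟨s, fun _ => false, (torusCell_false s).symm, torusRank_false⟩

lemma mem_skel_one_iff (hp : ∀ i, 3 ≤ p i) {x : Finset (∀ i, ZMod (p i))} :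
    x ∈ (torusPre p).skel 1 ↔ ∃ s j, x = {s, Function.update s j (s j + 1)} := by
  rw [mem_skel_iff hp]
  constructor
  · rintro ⟨s, k, rfl, hk⟩
    obtain ⟨j, hj⟩ := Finset.card_eq_one.mp hk
    have hkj : k = fun i => decide (i = j) := by
      funext i
      have : i ∈ Finset.filter (fun i => k i = true) Finset.univ ↔ i ∈ ({j} : Finset (Fin ℓ)) := by
        rw [hj]
      simp only [Finset.mem_filter, Finset.mem_univ, true_and, Finset.mem_singleton] at this
      by_cases hij : i = j
      · subst hij
        simp [this.mpr rfl]
      · have hki : k i = false := by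
          rcases Bool.eq_false_or_eq_true (k i) with h' | h'
          · exact absurd (this.mp h') hij
          · exact h'
        rw [hki, decide_eq_false hij]
    rw [hkj, torusCell_single hp]
    exact ⟨s, j, rfl⟩
  · rintro ⟨s, j, rfl⟩
    exact ⟨s, fun i => decide (i = j), (torusCell_single hp s j).symm, torusRank_single j⟩

/-- The product-of-cycles graph on the nodes of the torus. -/
def stepG (p : Fin ℓ → ℕ) : SimpleGraph (∀ i, ZMod (p i)) where
  Adj a b := a ≠ b ∧ ∃ j, b = Function.update a j (a j + 1) ∨ a = Function.update b j (b j + 1)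
  symm := ⟨by
    rintro a b ⟨hne, j, h | h⟩
    · exact ⟨hne.symm, j, Or.inr h⟩
    · exact ⟨hne.symm, j, Or.inl h⟩⟩
  loopless := ⟨by
    rintro a ⟨hne, -⟩
    exact hne rfl⟩

lemma zeroGraph_adj_iff (hp : ∀ i, 3 ≤ p i) {a b : ∀ i, ZMod (p i)}
    (ha : ({a} : Finset _) ∈ (torusPre p).skel 0) (hb : ({b} : Finset _) ∈ (torusPre p).skel 0) :
    (zeroGraph (torusPre p)).Adj ⟨{a}, ha⟩ ⟨{b}, hb⟩ ↔ (stepG p).Adj a b := by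
  constructor
  · rintro ⟨hne, z, hz, h1, h2⟩
    have hab : a ≠ b := fun h => hne (by simp [h])
    obtain ⟨s, j, rfl⟩ := (mem_skel_one_iff hp).mp hz
    have ha' := h1 (Finset.mem_singleton_self a)
    have hb' := h2 (Finset.mem_singleton_self b)
    simp only [Finset.mem_insert, Finset.mem_singleton] at ha' hb'
    refine ⟨hab, j, ?_⟩
    rcases ha' with rfl | rfl <;> rcases hb' with rfl | rfl
    · exact absurd rfl hab
    · exact Or.inl rfl
    · exact Or.inr rfl
    · exact absurd rfl hab
  · rintro ⟨hab, j, h | h⟩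
    · refine ⟨fun h' => hab (by simpa using h'), {a, Function.update a j (a j + 1)},
        (mem_skel_one_iff hp).mpr ⟨a, j, rfl⟩, by simp, by simp [h]⟩
    · refine ⟨fun h' => hab (by simpa using h'), {b, Function.update b j (b j + 1)},
        (mem_skel_one_iff hp).mpr ⟨b, j, rfl⟩, by simp [h], by simp⟩

noncomputable def zeroIso (hp : ∀ i, 3 ≤ p i) : stepG p ≃g zeroGraph (torusPre p) := by
  refine RelIso.mk (Equiv.ofBijective
    (fun a => (⟨{a}, (mem_skel_zero_iff hp).mpr ⟨a, rfl⟩⟩ :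
      {x : Finset (∀ i, ZMod (p i)) // x ∈ (torusPre p).skel 0})) ⟨?_, ?_⟩) ?_
  · intro a b h
    have : ({a} : Finset _) = {b} := congrArg Subtype.val h
    simpa using this
  · rintro ⟨x, hx⟩
    obtain ⟨s, rfl⟩ := (mem_skel_zero_iff hp).mp hx
    exact ⟨s, rfl⟩
  · intro a b
    exact zeroGraph_adj_iff hp _ _

end ZeroOne

end TDL
namespace TDL

section Dist

/-- Distance from `0` in the cycle `ℤ/m`. -/
def cdist (m : ℕ) (x : ZMod m) : ℕ := min (ZMod.val x) (m - ZMod.val x)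

variable {m : ℕ}

lemma cdist_zero (hm : 3 ≤ m) : cdist m 0 = 0 := by
  haveI : NeZero m := ⟨by omega⟩
  unfold cdist
  rw [ZMod.val_zero]
  omega

lemma eq_zero_of_cdist_eq_zero (hm : 3 ≤ m) {x : ZMod m} (h : cdist m x = 0) : x = 0 := by
  haveI : NeZero m := ⟨by omega⟩
  have hv := ZMod.val_lt x
  unfold cdist at h
  exact (ZMod.val_eq_zero x).mp (by omega)

lemma cdist_le_half (hm : 3 ≤ m) (x : ZMod m) : cdist m x ≤ m / 2 := by
  haveI : NeZero m := ⟨by omega⟩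
  have hv := ZMod.val_lt x
  unfold cdist
  omega

lemma val_add_one_cases (hm : 3 ≤ m) (x : ZMod m) :
    ((x + 1).val = x.val + 1 ∧ x.val + 1 < m) ∨ (x.val = m - 1 ∧ (x + 1).val = 0) := by
  haveI : NeZero m := ⟨by omega⟩
  haveI : Fact (1 < m) := ⟨by omega⟩
  have hv := ZMod.val_lt x
  have h := ZMod.val_add x 1
  rw [ZMod.val_one] at h
  by_cases hx : x.val + 1 = m
  · right
    refine ⟨by omega, ?_⟩
    rw [h, hx, Nat.mod_self]
  · left
    have hlt : x.val + 1 < m := by omega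
    rw [h, Nat.mod_eq_of_lt hlt]
    exact ⟨rfl, hlt⟩

lemma val_sub_one_cases (hm : 3 ≤ m) (x : ZMod m) :
    ((x - 1).val = x.val - 1 ∧ 1 ≤ x.val) ∨ (x.val = 0 ∧ (x - 1).val = m - 1) := by
  have h := val_add_one_cases hm (x - 1)
  rw [sub_add_cancel] at h
  rcases h with ⟨h1, h2⟩ | ⟨h1, h2⟩
  · left; omega
  · right; exact ⟨h2, h1⟩

lemma cdist_add_one_le (hm : 3 ≤ m) (x : ZMod m) : cdist m (x + 1) ≤ cdist m x + 1 := by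
  haveI : NeZero m := ⟨by omega⟩
  have hv := ZMod.val_lt x
  rcases val_add_one_cases hm x with ⟨h1, h2⟩ | ⟨h1, h2⟩ <;> unfold cdist <;> omega

lemma cdist_sub_one_le (hm : 3 ≤ m) (x : ZMod m) : cdist m (x - 1) ≤ cdist m x + 1 := by
  haveI : NeZero m := ⟨by omega⟩
  have hv := ZMod.val_lt x
  rcases val_sub_one_cases hm x with ⟨h1, h2⟩ | ⟨h1, h2⟩ <;> unfold cdist <;> omega

lemma cdist_decrease (hm : 3 ≤ m) {x : ZMod m} (hx : x ≠ 0) :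
    ∃ y : ZMod m, (y = x + 1 ∨ y = x - 1) ∧ cdist m y + 1 = cdist m x := by
  haveI : NeZero m := ⟨by omega⟩
  have hv := ZMod.val_lt x
  have hv0 : x.val ≠ 0 := fun h => hx ((ZMod.val_eq_zero x).mp h)
  by_cases hhalf : 2 * x.val ≤ m
  · refine ⟨x - 1, Or.inr rfl, ?_⟩
    rcases val_sub_one_cases hm x with ⟨h1, h2⟩ | ⟨h1, h2⟩
    · unfold cdist; omega
    · omega
  · refine ⟨x + 1, Or.inl rfl, ?_⟩
    rcases val_add_one_cases hm x with ⟨h1, h2⟩ | ⟨h1, h2⟩ <;> unfold cdist <;> omega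

end Dist

section FDist

variable {ℓ : ℕ} {p : Fin ℓ → ℕ}

/-- The ℓ¹ product of cycle distances on the torus nodes. -/
def fdist (p : Fin ℓ → ℕ) (a b : ∀ i, ZMod (p i)) : ℕ := ∑ j, cdist (p j) (a j - b j)

lemma fdist_self (hp : ∀ i, 3 ≤ p i) (a : ∀ i, ZMod (p i)) : fdist p a a = 0 := by
  unfold fdist
  apply Finset.sum_eq_zero
  intro j _
  rw [sub_self]
  exact cdist_zero (hp j)

lemma eq_of_fdist_eq_zero (hp : ∀ i, 3 ≤ p i) {a b : ∀ i, ZMod (p i)}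
    (h : fdist p a b = 0) : a = b := by
  funext j
  have h1 := Finset.sum_eq_zero_iff.mp h j (Finset.mem_univ j)
  have h2 := eq_zero_of_cdist_eq_zero (hp j) h1
  exact sub_eq_zero.mp h2

lemma fdist_le (hp : ∀ i, 3 ≤ p i) (a b : ∀ i, ZMod (p i)) :
    fdist p a b ≤ ∑ j, p j / 2 :=
  Finset.sum_le_sum fun j _ => cdist_le_half (hp j) _

lemma stepG_adj_add (hp : ∀ i, 3 ≤ p i) (a : ∀ i, ZMod (p i)) (j : Fin ℓ) :
    (stepG p).Adj a (Function.update a j (a j + 1)) := by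
  refine ⟨fun h => ?_, j, Or.inl rfl⟩
  have := congrFun h j
  rw [Function.update_self] at this
  exact zmod_add_one_ne (hp j) (a j) this.symm

lemma stepG_adj_sub (hp : ∀ i, 3 ≤ p i) (a : ∀ i, ZMod (p i)) (j : Fin ℓ) :
    (stepG p).Adj a (Function.update a j (a j - 1)) := by
  refine ⟨fun h => ?_, j, Or.inr ?_⟩
  · have := congrFun h j
    rw [Function.update_self] at this
    apply zmod_add_one_ne (hp j) (a j - 1)
    linear_combination this
  · rw [Function.update_self, Function.update_idem, sub_add_cancel, Function.update_eq_self]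

lemma fdist_step (hp : ∀ i, 3 ≤ p i) {u v : ∀ i, ZMod (p i)} (h : (stepG p).Adj u v)
    (b : ∀ i, ZMod (p i)) : fdist p u b ≤ fdist p v b + 1 := by
  obtain ⟨hne, j, hj⟩ := h
  have hoff : ∀ i, i ≠ j → u i = v i := by
    intro i hij
    rcases hj with hj | hj
    · rw [hj, Function.update_of_ne hij]
    · rw [hj, Function.update_of_ne hij]
  have hj' : u j - b j = (v j - b j) + 1 ∨ u j - b j = (v j - b j) - 1 := by
    rcases hj with hj | hj
    · right; rw [hj, Function.update_self]; ring
    · left; rw [hj, Function.update_self]; ring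
  have hcd : cdist (p j) (u j - b j) ≤ cdist (p j) (v j - b j) + 1 := by
    rcases hj' with h' | h' <;> rw [h']
    · exact cdist_add_one_le (hp j) _
    · exact cdist_sub_one_le (hp j) _
  unfold fdist
  rw [← Finset.add_sum_erase _ _ (Finset.mem_univ j),
    ← Finset.add_sum_erase _ (fun i => cdist (p i) (v i - b i)) (Finset.mem_univ j)]
  have hsum : ∑ i ∈ Finset.univ.erase j, cdist (p i) (u i - b i)
      = ∑ i ∈ Finset.univ.erase j, cdist (p i) (v i - b i) :=
    Finset.sum_congr rfl fun i hi => by rw [hoff i (Finset.ne_of_mem_erase hi)]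
  omega

lemma fdist_le_walk (hp : ∀ i, 3 ≤ p i) {a b : ∀ i, ZMod (p i)}
    (w : (stepG p).Walk a b) : fdist p a b ≤ w.length := by
  induction w with
  | nil => rw [fdist_self hp]; exact Nat.zero_le _
  | @cons u v c h q ih =>
    have h1 := fdist_step hp h c
    rw [SimpleGraph.Walk.length_cons]
    omega

lemma exists_walk_fdist (hp : ∀ i, 3 ≤ p i) :
    ∀ (n : ℕ) (a b : ∀ i, ZMod (p i)), fdist p a b = n →
      ∃ w : (stepG p).Walk a b, w.length = n := by
  intro n
  induction n with
  | zero =>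
    intro a b h
    obtain rfl : a = b := eq_of_fdist_eq_zero hp h
    exact ⟨SimpleGraph.Walk.nil, rfl⟩
  | succ n ih =>
    intro a b h
    have hne : ∃ j, a j - b j ≠ 0 := by
      by_contra hc
      push_neg at hc
      have h0 : fdist p a b = 0 := by
        unfold fdist
        apply Finset.sum_eq_zero
        intro j _
        rw [hc j]
        exact cdist_zero (hp j)
      omega
    obtain ⟨j, hj⟩ := hne
    obtain ⟨y, hy, hcd⟩ := cdist_decrease (hp j) hj
    have hadj : (stepG p).Adj a (Function.update a j (b j + y)) := by
      rcases hy with rfl | rfl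
      · have he : b j + (a j - b j + 1) = a j + 1 := by ring
        rw [he]
        exact stepG_adj_add hp a j
      · have he : b j + (a j - b j - 1) = a j - 1 := by ring
        rw [he]
        exact stepG_adj_sub hp a j
    have hval : Function.update a j (b j + y) j - b j = y := by
      rw [Function.update_self]; ring
    have hoff : ∀ i, i ≠ j → Function.update a j (b j + y) i = a i :=
      fun i hij => Function.update_of_ne hij _ _
    have hsplit : ∀ c : ∀ i, ZMod (p i), fdist p c b
        = cdist (p j) (c j - b j) + ∑ i ∈ Finset.univ.erase j, cdist (p i) (c i - b i) :=
      fun c => (Finset.add_sum_erase _ _ (Finset.mem_univ j)).symm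
    have hfd : fdist p (Function.update a j (b j + y)) b = n := by
      have h1 := hsplit a
      have h2 := hsplit (Function.update a j (b j + y))
      rw [hval] at h2
      have h3 : ∑ i ∈ Finset.univ.erase j, cdist (p i) (Function.update a j (b j + y) i - b i)
          = ∑ i ∈ Finset.univ.erase j, cdist (p i) (a i - b i) :=
        Finset.sum_congr rfl fun i hi => by rw [hoff i (Finset.ne_of_mem_erase hi)]
      omega
    obtain ⟨w, hw⟩ := ih _ b hfd
    exact ⟨SimpleGraph.Walk.cons hadj w, by rw [SimpleGraph.Walk.length_cons, hw]⟩

lemma stepG_edist (hp : ∀ i, 3 ≤ p i) (a b : ∀ i, ZMod (p i)) :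
    (stepG p).edist a b = (fdist p a b : ℕ∞) := by
  apply le_antisymm
  · obtain ⟨w, hw⟩ := exists_walk_fdist hp (fdist p a b) a b rfl
    have h1 := SimpleGraph.edist_le w
    rw [hw] at h1
    exact h1
  · rw [SimpleGraph.edist_eq_sInf]
    refine le_sInf ?_
    rintro x ⟨w, rfl⟩
    exact_mod_cast Nat.cast_le.mpr (fdist_le_walk hp w)

lemma stepG_ediam (hp : ∀ i, 3 ≤ p i) :
    (stepG p).ediam = ((∑ j, p j / 2 : ℕ) : ℕ∞) := by
  apply le_antisymm
  · refine SimpleGraph.ediam_le_of_edist_le fun u v => ?_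
    rw [stepG_edist hp]
    exact_mod_cast Nat.cast_le.mpr (fdist_le hp u v)
  · have hb : fdist p (fun j => ((p j / 2 : ℕ) : ZMod (p j))) 0 = ∑ j, p j / 2 := by
      unfold fdist
      apply Finset.sum_congr rfl
      intro j _
      haveI : NeZero (p j) := ⟨by have := hp j; omega⟩
      have h3 := hp j
      have hlt : p j / 2 < p j := by omega
      unfold cdist
      simp only [Pi.zero_apply, sub_zero]
      rw [ZMod.val_cast_of_lt hlt]
      omega
    calc ((∑ j, p j / 2 : ℕ) : ℕ∞) = (stepG p).edist (fun j => ((p j / 2 : ℕ) : ZMod (p j))) 0 := by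
          rw [stepG_edist hp, hb]
      _ ≤ _ := SimpleGraph.edist_le_ediam

end FDist

section IsoTransfer

variable {V W : Type*} {G : SimpleGraph V} {G' : SimpleGraph W}

lemma iso_edist_le (φ : G ≃g G') (u v : V) :
    G'.edist (φ u) (φ v) ≤ G.edist u v := by
  rw [SimpleGraph.edist_eq_sInf (G := G) (u := u) (v := v)]
  refine le_sInf ?_
  rintro x ⟨w, rfl⟩
  have h1 := SimpleGraph.edist_le (SimpleGraph.Walk.map φ.toHom w)
  rwa [SimpleGraph.Walk.length_map] at h1

lemma iso_edist_eq (φ : G ≃g G') (u v : V) :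
    G'.edist (φ u) (φ v) = G.edist u v := by
  refine le_antisymm (iso_edist_le φ u v) ?_
  have h1 := iso_edist_le φ.symm (φ u) (φ v)
  simpa using h1

lemma iso_ediam_eq (φ : G ≃g G') : G'.ediam = G.ediam := by
  apply le_antisymm
  · refine SimpleGraph.ediam_le_of_edist_le fun u v => ?_
    have h1 : G'.edist u v = G.edist (φ.symm u) (φ.symm v) := by
      rw [← iso_edist_eq φ (φ.symm u) (φ.symm v)]
      simp
    rw [h1]
    exact SimpleGraph.edist_le_ediam
  · refine SimpleGraph.ediam_le_of_edist_le fun u v => ?_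
    rw [← iso_edist_eq φ u v]
    exact SimpleGraph.edist_le_ediam

end IsoTransfer

lemma zeroGraph_diam {ℓ : ℕ} {p : Fin ℓ → ℕ} (hp : ∀ i, 3 ≤ p i) :
    (zeroGraph (torusPre p)).diam = ∑ j, p j / 2 := by
  rw [SimpleGraph.diam, iso_ediam_eq (zeroIso hp), stepG_ediam hp, ENat.toNat_coe]

end TDL
namespace TDL

/-- Tori satisfying `p₁⋯p_ℓ = p'₁⋯p'_ℓ`, all `p_j, p'_j ≥ 3`, and
`Σ ⌊p_j/2⌋ ≠ Σ ⌊p'_j/2⌋` have different `𝒜₍₀,₁₎`-diameters, yet every HOMP model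
assigns them the same output. -/
theorem torus_diff_diam_homp_indistinguishable {ℓ : ℕ} (p p' : Fin ℓ → ℕ)
    (hcard : ∏ i, p i = ∏ i, p' i)
    (hp : ∀ j, 3 ≤ p j) (hp' : ∀ j, 3 ≤ p' j)
    (hdiam : ∑ j, p j / 2 ≠ ∑ j, p' j / 2) :
    (zeroGraph (torusPre p)).diam ≠ (zeroGraph (torusPre p')).diam ∧
    ∀ {D : Type} {ℓ' : ℕ} (M : HOMP D ℓ'),
      M.out (torusPre p) = M.out (torusPre p') := by
  refine ⟨?_, fun {D ℓ'} M => out_torus_eq M hp hp' hcard⟩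
  rw [zeroGraph_diam hp, zeroGraph_diam hp']
  exact hdiam

end TDL
end

section
/- For integers h, p ≥ 3, the boundary graph ∂Cyl_{h,p} of the cylinder CC — whose vertices are the nodes contained in some boundary 1-cell and whose edges are the boundary 1-cells — is isomorphic to the disjoint union of two cycle graphs, each of length p. -/
namespace TDL

/-- The residue of `n` modulo `p` taken in `{1, …, p}`. -/
def residue (p n : ℕ) : ℕ := (n - 1) % p + 1

/-- The node map `ρ_cyl^{h,p}(s₁, s₂) = (s₁, s₂ mod p)`, residues in `{1,…,p}`. -/
def rhoCyl (p : ℕ) (s : ℕ × ℕ) : ℕ × ℕ := (s.1, residue p s.2)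

/-- The node map `ρ_möb^{h,p}`: `(s₁, s₂ mod p)` if `s₂ mod 2p ≤ p`, and
`(h + 1 − s₁, s₂ mod p)` otherwise, residues taken in `{1,…,p}` and `{1,…,2p}`. -/
def rhoMob (h p : ℕ) (s : ℕ × ℕ) : ℕ × ℕ :=
  if residue (2 * p) s.2 ≤ p then (s.1, residue p s.2) else (h + 1 - s.1, residue p s.2)

/-- The node set `[h] × [p]`. -/
def gridNodes (h p : ℕ) : Set (ℕ × ℕ) :=
  {s | 1 ≤ s.1 ∧ s.1 ≤ h ∧ 1 ≤ s.2 ∧ s.2 ≤ p}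

/-- Coordinatewise addition of `k ∈ {0,1}²` to a node. -/
def addK (s : ℕ × ℕ) (k : Bool × Bool) : ℕ × ℕ :=
  (s.1 + (if k.1 then 1 else 0), s.2 + (if k.2 then 1 else 0))

/-- The cell `s_k = { ρ(s + k') : k' ∈ {0,1}², k' ≤ k }`. -/
def stripCell (ρ : ℕ × ℕ → ℕ × ℕ) (s : ℕ × ℕ) (k : Bool × Bool) : Finset (ℕ × ℕ) :=
  (Finset.univ.filter fun k' : Bool × Bool => k'.1 ≤ k.1 ∧ k'.2 ≤ k.2).image
    fun k' => ρ (addK s k')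

/-- The rank `k₁ + k₂` of the cell `s_k`. -/
def stripRank (k : Bool × Bool) : ℕ :=
  (if k.1 then 1 else 0) + (if k.2 then 1 else 0)

/-- The complex with node set `[h] × [p]` glued via the node map `ρ`: for
`r ∈ {0,1,2}` its `r`-cells are the sets `s_k` with `s ∈ [h] × [p]`,
`k ∈ {0,1}²`, `k₁ + k₂ = r` and `ρ(s + k) ∈ [h] × [p]`. -/
noncomputable def stripPre (h p : ℕ) (ρ : ℕ × ℕ → ℕ × ℕ) : PreCC (ℕ × ℕ) where
  cells := {x | ∃ s ∈ gridNodes h p, ∃ k : Bool × Bool,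
    ρ (addK s k) ∈ gridNodes h p ∧ x = stripCell ρ s k}
  rk x := sInf {r | ∃ s ∈ gridNodes h p, ∃ k : Bool × Bool,
    ρ (addK s k) ∈ gridNodes h p ∧ x = stripCell ρ s k ∧ r = stripRank k}

/-- The cylinder combinatorial complex `Cyl_{h,p}`. -/
noncomputable def cylPre (h p : ℕ) : PreCC (ℕ × ℕ) := stripPre h p (rhoCyl p)

/-- The Möbius strip combinatorial complex `Möb_{h,p}`. -/
noncomputable def mobPre (h p : ℕ) : PreCC (ℕ × ℕ) := stripPre h p (rhoMob h p)

end TDL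

namespace TDL

/-- A boundary edge: a `1`-cell contained in exactly one `2`-cell. -/
def IsBoundaryEdge {S : Type*} (X : PreCC S) (x : Finset S) : Prop :=
  x ∈ X.skel 1 ∧ {y | y ∈ X.skel 2 ∧ x ⊆ y}.ncard = 1

/-- The boundary graph `∂X`: vertices are the nodes contained in some boundary
edge, and two distinct vertices are joined iff some boundary edge contains both. -/
def boundaryGraph {S : Type*} (X : PreCC S) :
    SimpleGraph {v : S // ∃ x, IsBoundaryEdge X x ∧ v ∈ x} where
  Adj u v := u ≠ v ∧ ∃ x, IsBoundaryEdge X x ∧ u.1 ∈ x ∧ v.1 ∈ x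
  symm := ⟨by
    rintro u v ⟨hne, x, hx, hu, hv⟩
    exact ⟨hne.symm, x, hx, hv, hu⟩⟩
  loopless := ⟨by rintro u ⟨hne, -⟩; exact hne rfl⟩

/-- The disjoint union of two simple graphs. -/
def graphSum {V W : Type*} (G : SimpleGraph V) (H : SimpleGraph W) :
    SimpleGraph (V ⊕ W) where
  Adj x y := Sum.LiftRel G.Adj H.Adj x y
  symm := ⟨by
    rintro x y (h | h)
    · exact Sum.LiftRel.inl (G.adj_symm h)
    · exact Sum.LiftRel.inr (H.adj_symm h)⟩
  loopless := ⟨by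
    rintro x (h | h)
    · exact G.irrefl h
    · exact H.irrefl h⟩

end TDL

namespace TDL
set_option linter.dupNamespace false

namespace CylAux

/-- Vertical edge cell. -/
def Vc (p a b : ℕ) : Finset (ℕ × ℕ) := {(a, b), (a, residue p (b+1))}
/-- Horizontal edge cell. -/
def Hc (a b : ℕ) : Finset (ℕ × ℕ) := {(a, b), (a+1, b)}
/-- Square 2-cell. -/
def Qc (p a b : ℕ) : Finset (ℕ × ℕ) :=
  {(a, b), (a+1, b), (a, residue p (b+1)), (a+1, residue p (b+1))}

lemma residue_eq {p : ℕ} (hp : 1 ≤ p) {n : ℕ} (h1 : 1 ≤ n) (h2 : n ≤ 2*p) :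
    residue p n = if n ≤ p then n else n - p := by
  unfold residue
  split_ifs with hn
  · rw [Nat.mod_eq_of_lt (by omega)]; omega
  · have he : n - 1 = (n - 1 - p) + 1 * p := by omega
    rw [he, Nat.add_mul_mod_self_right, Nat.mod_eq_of_lt (by omega)]; omega

lemma residue_bounds {p : ℕ} (hp : 1 ≤ p) (n : ℕ) :
    1 ≤ residue p n ∧ residue p n ≤ p := by
  unfold residue
  have := Nat.mod_lt (n-1) (show 0 < p by omega)
  omega

lemma residue_self {p b : ℕ} (h1 : 1 ≤ b) (h2 : b ≤ p) : residue p b = b := by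
  rw [residue_eq (by omega) h1 (by omega)]; simp [h2]

lemma succ_bounds {p b : ℕ} (hp : 1 ≤ p) : 1 ≤ residue p (b+1) ∧ residue p (b+1) ≤ p :=
  residue_bounds hp _

lemma succ_ne {p b : ℕ} (hp : 2 ≤ p) (h1 : 1 ≤ b) (h2 : b ≤ p) :
    residue p (b+1) ≠ b := by
  rw [residue_eq (by omega) (by omega) (by omega)]
  split_ifs <;> omega

lemma succ_succ_ne {p b : ℕ} (hp : 3 ≤ p) (h1 : 1 ≤ b) (h2 : b ≤ p) :
    residue p (residue p (b+1) + 1) ≠ b := by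
  have hi := residue_eq (p := p) (n := b+1) (by omega) (by omega) (by omega)
  rw [hi]
  split_ifs with hc <;>
    [rw [residue_eq (by omega) (by omega) (by omega)];
     rw [residue_eq (by omega) (by omega) (by omega)]] <;>
    split_ifs <;> omega

lemma succ_inj {p b c : ℕ} (hp : 1 ≤ p) (hb1 : 1 ≤ b) (hb2 : b ≤ p)
    (hc1 : 1 ≤ c) (hc2 : c ≤ p) (h : residue p (b+1) = residue p (c+1)) : b = c := by
  rw [residue_eq (by omega) (by omega) (by omega),
    residue_eq (by omega) (by omega) (by omega)] at h
  split_ifs at h <;> omega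

lemma mem_grid {h p : ℕ} {s : ℕ × ℕ} :
    s ∈ gridNodes h p ↔ 1 ≤ s.1 ∧ s.1 ≤ h ∧ 1 ≤ s.2 ∧ s.2 ≤ p := Iff.rfl

/- stripCell computations -/
lemma strip_ff {p a b : ℕ} : stripCell (rhoCyl p) (a, b) (false, false) =
    {(a, residue p b)} := by
  have hf : (Finset.univ.filter fun k' : Bool × Bool => k'.1 ≤ false ∧ k'.2 ≤ false)
      = {(false, false)} := by decide
  rw [stripCell, hf]
  simp [addK, rhoCyl]

lemma strip_tf {p a b : ℕ} : stripCell (rhoCyl p) (a, b) (true, false) =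
    {(a, residue p b), (a+1, residue p b)} := by
  have hf : (Finset.univ.filter fun k' : Bool × Bool => k'.1 ≤ true ∧ k'.2 ≤ false)
      = {(false, false), (true, false)} := by decide
  rw [stripCell, hf]
  simp [addK, rhoCyl]

lemma strip_ft {p a b : ℕ} : stripCell (rhoCyl p) (a, b) (false, true) =
    {(a, residue p b), (a, residue p (b+1))} := by
  have hf : (Finset.univ.filter fun k' : Bool × Bool => k'.1 ≤ false ∧ k'.2 ≤ true)
      = {(false, false), (false, true)} := by decide
  rw [stripCell, hf]
  simp [addK, rhoCyl]

lemma strip_tt {p a b : ℕ} : stripCell (rhoCyl p) (a, b) (true, true) =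
    {(a, residue p b), (a+1, residue p b), (a, residue p (b+1)), (a+1, residue p (b+1))} := by
  have hf : (Finset.univ.filter fun k' : Bool × Bool => k'.1 ≤ true ∧ k'.2 ≤ true)
      = {(false, false), (true, false), (false, true), (true, true)} := by decide
  rw [stripCell, hf]
  ext t
  simp [addK, rhoCyl]

/- membership in cylPre cells -/
lemma mem_cells_iff {h p : ℕ} (hp : 3 ≤ p) {x : Finset (ℕ × ℕ)} :
    x ∈ (cylPre h p).cells ↔ ∃ a b, 1 ≤ a ∧ 1 ≤ b ∧ b ≤ p ∧
      ((a ≤ h ∧ x = {(a, b)}) ∨ (a + 1 ≤ h ∧ x = Hc a b) ∨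
       (a ≤ h ∧ x = Vc p a b) ∨ (a + 1 ≤ h ∧ x = Qc p a b)) := by
  constructor
  · rintro ⟨⟨a, b⟩, hs, ⟨k1, k2⟩, hk, rfl⟩
    rw [mem_grid] at hs
    obtain ⟨ha1, ha2, hb1, hb2⟩ := hs
    refine ⟨a, b, ha1, hb1, hb2, ?_⟩
    have hres : residue p b = b := residue_self hb1 hb2
    cases k1 <;> cases k2 <;>
      simp [rhoCyl, addK, mem_grid] at hk
    · exact Or.inl ⟨by omega, by rw [strip_ff, hres]⟩
    · refine Or.inr (Or.inr (Or.inl ⟨by omega, ?_⟩))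
      rw [strip_ft, hres]; rfl
    · refine Or.inr (Or.inl ⟨by omega, ?_⟩)
      rw [strip_tf, hres]; rfl
    · refine Or.inr (Or.inr (Or.inr ⟨by omega, ?_⟩))
      rw [strip_tt, hres]; rfl
  · rintro ⟨a, b, ha1, hb1, hb2, hx⟩
    have hres : residue p b = b := residue_self hb1 hb2
    have hrb := residue_bounds (p := p) (by omega) (b+1)
    rcases hx with ⟨hah, rfl⟩ | ⟨hah, rfl⟩ | ⟨hah, rfl⟩ | ⟨hah, rfl⟩
    · exact ⟨(a, b), by rw [mem_grid]; omega, (false, false),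
        by simp [rhoCyl, addK, mem_grid]; omega, by rw [strip_ff, hres]⟩
    · exact ⟨(a, b), by rw [mem_grid]; omega, (true, false),
        by simp [rhoCyl, addK, mem_grid]; omega, by rw [strip_tf, hres]; rfl⟩
    · exact ⟨(a, b), by rw [mem_grid]; omega, (false, true),
        by simp [rhoCyl, addK, mem_grid]; omega, by rw [strip_ft, hres]; rfl⟩
    · exact ⟨(a, b), by rw [mem_grid]; omega, (true, true),
        by simp [rhoCyl, addK, mem_grid]; omega, by rw [strip_tt, hres]; rfl⟩

end CylAux
namespace CylAux

lemma card_Hc (a b : ℕ) : (Hc a b).card = 2 := by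
  rw [Hc, Finset.card_insert_of_notMem (by simp), Finset.card_singleton]

lemma card_Vc {p b : ℕ} (hp : 2 ≤ p) (h1 : 1 ≤ b) (h2 : b ≤ p) (a : ℕ) :
    (Vc p a b).card = 2 := by
  have hne := succ_ne hp h1 h2
  rw [Vc, Finset.card_insert_of_notMem (by simp [Prod.ext_iff]; try omega),
    Finset.card_singleton]

lemma card_Qc {p b : ℕ} (hp : 2 ≤ p) (h1 : 1 ≤ b) (h2 : b ≤ p) (a : ℕ) :
    (Qc p a b).card = 4 := by
  have hne := succ_ne hp h1 h2
  rw [Qc, Finset.card_insert_of_notMem (by simp [Prod.ext_iff]; try omega),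
    Finset.card_insert_of_notMem (by simp [Prod.ext_iff]; try omega),
    Finset.card_insert_of_notMem (by simp [Prod.ext_iff]; try omega),
    Finset.card_singleton]

lemma rep_card {h p : ℕ} (hp : 3 ≤ p) {s : ℕ × ℕ} (hs : s ∈ gridNodes h p)
    (k : Bool × Bool) : (stripCell (rhoCyl p) s k).card = 2 ^ stripRank k := by
  obtain ⟨a, b⟩ := s
  rw [mem_grid] at hs
  have hres : residue p b = b := residue_self hs.2.2.1 hs.2.2.2
  obtain ⟨k1, k2⟩ := k
  cases k1 <;> cases k2
  · rw [strip_ff]; simp [stripRank]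
  · rw [strip_ft, hres]
    rw [show ({(a, b), (a, residue p (b+1))} : Finset (ℕ×ℕ)) = Vc p a b from rfl,
      card_Vc (by omega) hs.2.2.1 hs.2.2.2]
    simp [stripRank]
  · rw [strip_tf, hres]
    rw [show ({(a, b), (a+1, b)} : Finset (ℕ×ℕ)) = Hc a b from rfl, card_Hc]
    simp [stripRank]
  · rw [strip_tt, hres]
    rw [show ({(a, b), (a+1, b), (a, residue p (b+1)), (a+1, residue p (b+1))} :
        Finset (ℕ×ℕ)) = Qc p a b from rfl,
      card_Qc (by omega) hs.2.2.1 hs.2.2.2]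
    simp [stripRank]

lemma rk_eq {h p : ℕ} (hp : 3 ≤ p) {s : ℕ × ℕ} {k : Bool × Bool} {x : Finset (ℕ × ℕ)}
    (hs : s ∈ gridNodes h p) (hk : rhoCyl p (addK s k) ∈ gridNodes h p)
    (hx : x = stripCell (rhoCyl p) s k) : (cylPre h p).rk x = stripRank k := by
  have hset : {r | ∃ s' ∈ gridNodes h p, ∃ k' : Bool × Bool,
      rhoCyl p (addK s' k') ∈ gridNodes h p ∧ x = stripCell (rhoCyl p) s' k' ∧
        r = stripRank k'} = {stripRank k} := by
    ext r
    simp only [Set.mem_setOf_eq, Set.mem_singleton_iff]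
    constructor
    · rintro ⟨s', hs', k', hk', hx', rfl⟩
      have h1 : x.card = 2 ^ stripRank k := hx ▸ rep_card hp hs k
      have h2 : x.card = 2 ^ stripRank k' := hx' ▸ rep_card hp hs' k'
      exact Nat.pow_right_injective (by norm_num) (h2.symm.trans h1)
    · rintro rfl
      exact ⟨s, hs, k, hk, hx, rfl⟩
  show sInf _ = _
  rw [hset]
  exact csInf_singleton _

lemma rk_single {h p a b : ℕ} (hp : 3 ≤ p) (ha1 : 1 ≤ a) (ha2 : a ≤ h)
    (hb1 : 1 ≤ b) (hb2 : b ≤ p) : (cylPre h p).rk {(a, b)} = 0 := by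
  have hres : residue p b = b := residue_self hb1 hb2
  have := rk_eq (h := h) hp (s := (a,b)) (k := (false,false))
    (by rw [mem_grid]; exact ⟨ha1, ha2, hb1, hb2⟩)
    (by simp [rhoCyl, addK, mem_grid, hres]; try omega)
    (by rw [strip_ff, hres])
  simpa [stripRank] using this

lemma rk_Hc {h p a b : ℕ} (hp : 3 ≤ p) (ha1 : 1 ≤ a) (ha2 : a + 1 ≤ h)
    (hb1 : 1 ≤ b) (hb2 : b ≤ p) : (cylPre h p).rk (Hc a b) = 1 := by
  have hres : residue p b = b := residue_self hb1 hb2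
  have := rk_eq (h := h) hp (s := (a,b)) (k := (true,false))
    (by rw [mem_grid]; refine ⟨ha1, by omega, hb1, hb2⟩)
    (by simp [rhoCyl, addK, mem_grid, hres]; try omega)
    (by rw [strip_tf, hres]; try rfl)
  simpa [stripRank, Hc] using this

lemma rk_Vc {h p a b : ℕ} (hp : 3 ≤ p) (ha1 : 1 ≤ a) (ha2 : a ≤ h)
    (hb1 : 1 ≤ b) (hb2 : b ≤ p) : (cylPre h p).rk (Vc p a b) = 1 := by
  have hres : residue p b = b := residue_self hb1 hb2
  have := rk_eq (h := h) hp (s := (a,b)) (k := (false,true))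
    (by rw [mem_grid]; exact ⟨ha1, ha2, hb1, hb2⟩)
    (by have := residue_bounds (p := p) (by omega) (b+1);
        simp [rhoCyl, addK, mem_grid]; omega)
    (by rw [strip_ft, hres]; try rfl)
  simpa [stripRank, Vc] using this

lemma rk_Qc {h p a b : ℕ} (hp : 3 ≤ p) (ha1 : 1 ≤ a) (ha2 : a + 1 ≤ h)
    (hb1 : 1 ≤ b) (hb2 : b ≤ p) : (cylPre h p).rk (Qc p a b) = 2 := by
  have hres : residue p b = b := residue_self hb1 hb2
  have := rk_eq (h := h) hp (s := (a,b)) (k := (true,true))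
    (by rw [mem_grid]; refine ⟨ha1, by omega, hb1, hb2⟩)
    (by have := residue_bounds (p := p) (by omega) (b+1);
        simp [rhoCyl, addK, mem_grid]; omega)
    (by rw [strip_tt, hres]; try rfl)
  simpa [stripRank, Qc] using this

lemma mem_skel1_iff {h p : ℕ} (hp : 3 ≤ p) {x : Finset (ℕ × ℕ)} :
    x ∈ (cylPre h p).skel 1 ↔ ∃ a b, 1 ≤ a ∧ 1 ≤ b ∧ b ≤ p ∧
      ((a + 1 ≤ h ∧ x = Hc a b) ∨ (a ≤ h ∧ x = Vc p a b)) := by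
  constructor
  · rintro ⟨hc, hrk⟩
    rw [mem_cells_iff hp] at hc
    obtain ⟨a, b, ha, hb1, hb2, hcase⟩ := hc
    rcases hcase with ⟨hah, rfl⟩ | ⟨hah, rfl⟩ | ⟨hah, rfl⟩ | ⟨hah, rfl⟩
    · rw [rk_single hp ha hah hb1 hb2] at hrk; omega
    · exact ⟨a, b, ha, hb1, hb2, Or.inl ⟨hah, rfl⟩⟩
    · exact ⟨a, b, ha, hb1, hb2, Or.inr ⟨hah, rfl⟩⟩
    · rw [rk_Qc hp ha hah hb1 hb2] at hrk; omega
  · rintro ⟨a, b, ha, hb1, hb2, ⟨hah, rfl⟩ | ⟨hah, rfl⟩⟩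
    · exact ⟨(mem_cells_iff hp).mpr ⟨a, b, ha, hb1, hb2, Or.inr (Or.inl ⟨hah, rfl⟩)⟩,
        rk_Hc hp ha hah hb1 hb2⟩
    · exact ⟨(mem_cells_iff hp).mpr ⟨a, b, ha, hb1, hb2, Or.inr (Or.inr (Or.inl ⟨hah, rfl⟩))⟩,
        rk_Vc hp ha hah hb1 hb2⟩

lemma mem_skel2_iff {h p : ℕ} (hp : 3 ≤ p) {x : Finset (ℕ × ℕ)} :
    x ∈ (cylPre h p).skel 2 ↔ ∃ a b, 1 ≤ a ∧ a + 1 ≤ h ∧ 1 ≤ b ∧ b ≤ p ∧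
      x = Qc p a b := by
  constructor
  · rintro ⟨hc, hrk⟩
    rw [mem_cells_iff hp] at hc
    obtain ⟨a, b, ha, hb1, hb2, hcase⟩ := hc
    rcases hcase with ⟨hah, rfl⟩ | ⟨hah, rfl⟩ | ⟨hah, rfl⟩ | ⟨hah, rfl⟩
    · rw [rk_single hp ha hah hb1 hb2] at hrk; omega
    · rw [rk_Hc hp ha hah hb1 hb2] at hrk; omega
    · rw [rk_Vc hp ha hah hb1 hb2] at hrk; omega
    · exact ⟨a, b, ha, hah, hb1, hb2, rfl⟩
  · rintro ⟨a, b, ha, hah, hb1, hb2, rfl⟩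
    exact ⟨(mem_cells_iff hp).mpr ⟨a, b, ha, hb1, hb2, Or.inr (Or.inr (Or.inr ⟨hah, rfl⟩))⟩,
      rk_Qc hp ha hah hb1 hb2⟩

lemma Vc_subset_Qc {p : ℕ} (hp : 3 ≤ p) {a b a' c : ℕ}
    (hb1 : 1 ≤ b) (hb2 : b ≤ p) (hc1 : 1 ≤ c) (hc2 : c ≤ p) :
    Vc p a b ⊆ Qc p a' c ↔ (a = a' ∨ a = a' + 1) ∧ b = c := by
  constructor
  · intro hsub
    have h1 : ((a, b) : ℕ × ℕ) ∈ Qc p a' c := hsub (by simp [Vc])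
    have h2 : ((a, residue p (b+1)) : ℕ × ℕ) ∈ Qc p a' c := hsub (by simp [Vc])
    simp only [Qc, Finset.mem_insert, Finset.mem_singleton, Prod.mk.injEq] at h1 h2
    have hnec := succ_ne (show 2 ≤ p by omega) hc1 hc2
    have hneb := succ_ne (show 2 ≤ p by omega) hb1 hb2
    have hssc := succ_succ_ne hp hc1 hc2
    rcases h1 with ⟨ha, hb⟩ | ⟨ha, hb⟩ | ⟨ha, hb⟩ | ⟨ha, hb⟩ <;>
      rcases h2 with ⟨ha2, hb2'⟩ | ⟨ha2, hb2'⟩ | ⟨ha2, hb2'⟩ | ⟨ha2, hb2'⟩ <;>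
      first
        | exact ⟨by omega, hb⟩
        | (exfalso;
           have hbc := succ_inj (show 1 ≤ p by omega) hb1 hb2 hc1 hc2 hb2'; omega)
        | (exfalso; rw [hb] at hb2'; exact hssc hb2')
  · rintro ⟨ha, rfl⟩
    intro t ht
    simp only [Vc, Finset.mem_insert, Finset.mem_singleton] at ht
    simp only [Qc, Finset.mem_insert, Finset.mem_singleton]
    rcases ha with rfl | rfl <;> rcases ht with rfl | rfl <;> tauto

lemma bd_V1 {h p : ℕ} (hh : 3 ≤ h) (hp : 3 ≤ p) {b : ℕ} (hb1 : 1 ≤ b) (hb2 : b ≤ p) :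
    {y | y ∈ (cylPre h p).skel 2 ∧ Vc p 1 b ⊆ y} = {Qc p 1 b} := by
  ext y
  simp only [Set.mem_setOf_eq, Set.mem_singleton_iff]
  constructor
  · rintro ⟨hy, hsub⟩
    rw [mem_skel2_iff hp] at hy
    obtain ⟨a', c, ha1, ha2, hc1, hc2, rfl⟩ := hy
    rw [Vc_subset_Qc hp hb1 hb2 hc1 hc2] at hsub
    obtain ⟨haa, rfl⟩ := hsub
    have ha' : a' = 1 := by omega
    rw [ha']
  · rintro rfl
    refine ⟨(mem_skel2_iff hp).mpr ⟨1, b, le_refl 1, by omega, hb1, hb2, rfl⟩, ?_⟩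
    rw [Vc_subset_Qc hp hb1 hb2 hb1 hb2]
    exact ⟨Or.inl rfl, rfl⟩

lemma bd_Vh {h p : ℕ} (hh : 3 ≤ h) (hp : 3 ≤ p) {b : ℕ} (hb1 : 1 ≤ b) (hb2 : b ≤ p) :
    {y | y ∈ (cylPre h p).skel 2 ∧ Vc p h b ⊆ y} = {Qc p (h-1) b} := by
  ext y
  simp only [Set.mem_setOf_eq, Set.mem_singleton_iff]
  constructor
  · rintro ⟨hy, hsub⟩
    rw [mem_skel2_iff hp] at hy
    obtain ⟨a', c, ha1, ha2, hc1, hc2, rfl⟩ := hy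
    rw [Vc_subset_Qc hp hb1 hb2 hc1 hc2] at hsub
    obtain ⟨haa, rfl⟩ := hsub
    have ha' : a' = h - 1 := by omega
    rw [ha']
  · rintro rfl
    refine ⟨(mem_skel2_iff hp).mpr ⟨h-1, b, by omega, by omega, hb1, hb2, rfl⟩, ?_⟩
    rw [Vc_subset_Qc hp hb1 hb2 hb1 hb2]
    exact ⟨Or.inr (by omega), rfl⟩

lemma isBoundary_iff {h p : ℕ} (hh : 3 ≤ h) (hp : 3 ≤ p) (x : Finset (ℕ × ℕ)) :
    IsBoundaryEdge (cylPre h p) x ↔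
      ∃ b, 1 ≤ b ∧ b ≤ p ∧ (x = Vc p 1 b ∨ x = Vc p h b) := by
  constructor
  · rintro ⟨hx1, hcount⟩
    rw [mem_skel1_iff hp] at hx1
    obtain ⟨a, b, ha, hb1, hb2, hcase⟩ := hx1
    have hne1 := succ_ne (show 2 ≤ p by omega) hb1 hb2
    have hne2 := succ_succ_ne hp hb1 hb2
    rcases hcase with ⟨hah, rfl⟩ | ⟨hah, rfl⟩
    · -- horizontal edge: contained in two squares, contradiction
      exfalso
      obtain ⟨y0, hy0⟩ := Set.ncard_eq_one.mp hcount
      set pb := if b = 1 then p else b - 1 with hpbdef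
      have hpb1 : 1 ≤ pb := by rw [hpbdef]; split_ifs <;> omega
      have hpb2 : pb ≤ p := by rw [hpbdef]; split_ifs <;> omega
      have hsucc : residue p (pb + 1) = b := by
        rw [hpbdef]; split_ifs with hb
        · rw [residue_eq (by omega) (by omega) (by omega)]; split_ifs <;> omega
        · rw [show b - 1 + 1 = b from by omega, residue_self hb1 hb2]
      have hQ : Qc p a pb = {(a, pb), (a+1, pb), (a, b), (a+1, b)} := by
        rw [Qc, hsucc]
      have hm1 : Qc p a b ∈ {y | y ∈ (cylPre h p).skel 2 ∧ Hc a b ⊆ y} := by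
        refine ⟨(mem_skel2_iff hp).mpr ⟨a, b, ha, hah, hb1, hb2, rfl⟩, ?_⟩
        intro t ht
        simp only [Hc, Finset.mem_insert, Finset.mem_singleton] at ht
        simp only [Qc, Finset.mem_insert, Finset.mem_singleton]
        tauto
      have hm2 : Qc p a pb ∈ {y | y ∈ (cylPre h p).skel 2 ∧ Hc a b ⊆ y} := by
        refine ⟨(mem_skel2_iff hp).mpr ⟨a, pb, ha, hah, hpb1, hpb2, rfl⟩, ?_⟩
        intro t ht
        simp only [Hc, Finset.mem_insert, Finset.mem_singleton] at ht
        rw [hQ]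
        simp only [Finset.mem_insert, Finset.mem_singleton]
        tauto
      rw [hy0, Set.mem_singleton_iff] at hm1 hm2
      have heq : Qc p a b = Qc p a pb := hm1.trans hm2.symm
      have hmm : ((a, pb) : ℕ × ℕ) ∈ Qc p a b := by
        rw [heq, hQ]; simp
      simp only [Qc, Finset.mem_insert, Finset.mem_singleton, Prod.mk.injEq] at hmm
      rcases hmm with ⟨-, h'⟩ | ⟨h', -⟩ | ⟨-, h'⟩ | ⟨h', -⟩
      · rw [h'] at hsucc; omega
      · omega
      · rw [h'] at hsucc; exact hne2 hsucc
      · omega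
    · -- vertical edge
      by_cases ha1 : a = 1
      · exact ⟨b, hb1, hb2, Or.inl (by rw [← ha1])⟩
      by_cases hahh : a = h
      · exact ⟨b, hb1, hb2, Or.inr (by rw [← hahh])⟩
      · exfalso
        obtain ⟨y0, hy0⟩ := Set.ncard_eq_one.mp hcount
        have hm1 : Qc p a b ∈ {y | y ∈ (cylPre h p).skel 2 ∧ Vc p a b ⊆ y} := by
          refine ⟨(mem_skel2_iff hp).mpr ⟨a, b, ha, by omega, hb1, hb2, rfl⟩, ?_⟩
          rw [Vc_subset_Qc hp hb1 hb2 hb1 hb2]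
          exact ⟨Or.inl rfl, rfl⟩
        have hm2 : Qc p (a-1) b ∈ {y | y ∈ (cylPre h p).skel 2 ∧ Vc p a b ⊆ y} := by
          refine ⟨(mem_skel2_iff hp).mpr ⟨a-1, b, by omega, by omega, hb1, hb2, rfl⟩, ?_⟩
          rw [Vc_subset_Qc hp hb1 hb2 hb1 hb2]
          exact ⟨Or.inr (by omega), rfl⟩
        rw [hy0, Set.mem_singleton_iff] at hm1 hm2
        have heq : Qc p a b = Qc p (a-1) b := hm1.trans hm2.symm
        have hmm : ((a-1, b) : ℕ × ℕ) ∈ Qc p a b := by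
          rw [heq]; simp [Qc]
        simp only [Qc, Finset.mem_insert, Finset.mem_singleton, Prod.mk.injEq] at hmm
        omega
  · rintro ⟨b, hb1, hb2, rfl | rfl⟩
    · exact ⟨(mem_skel1_iff hp).mpr ⟨1, b, le_refl 1, hb1, hb2, Or.inr ⟨by omega, rfl⟩⟩,
        by rw [bd_V1 hh hp hb1 hb2]; exact Set.ncard_singleton _⟩
    · exact ⟨(mem_skel1_iff hp).mpr ⟨h, b, by omega, hb1, hb2, Or.inr ⟨le_refl h, rfl⟩⟩,
        by rw [bd_Vh hh hp hb1 hb2]; exact Set.ncard_singleton _⟩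

lemma vertex_iff {h p : ℕ} (hh : 3 ≤ h) (hp : 3 ≤ p) (v : ℕ × ℕ) :
    (∃ x, IsBoundaryEdge (cylPre h p) x ∧ v ∈ x) ↔
      (v.1 = 1 ∨ v.1 = h) ∧ 1 ≤ v.2 ∧ v.2 ≤ p := by
  constructor
  · rintro ⟨x, hbd, hv⟩
    rw [isBoundary_iff hh hp] at hbd
    obtain ⟨b, hb1, hb2, rfl | rfl⟩ := hbd <;>
      simp only [Vc, Finset.mem_insert, Finset.mem_singleton] at hv <;>
      have hsb := residue_bounds (p := p) (show 1 ≤ p by omega) (b+1) <;>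
      rcases hv with rfl | rfl <;>
      exact ⟨by simp, by simp; omega, by simp; omega⟩
  · rintro ⟨h1, h2, h3⟩
    refine ⟨Vc p v.1 v.2, ?_, by simp [Vc]⟩
    rw [isBoundary_iff hh hp]
    exact ⟨v.2, h2, h3, by rcases h1 with h1 | h1 <;> rw [h1] <;> [left; right] <;> rfl⟩

end CylAux
namespace CylAux

lemma cast_inj {p x y : ℕ} (hx1 : 1 ≤ x) (hx2 : x ≤ p) (hy1 : 1 ≤ y) (hy2 : y ≤ p)
    (hc : (x : ZMod p) = (y : ZMod p)) : x = y := by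
  have h' : x % p = y % p := (ZMod.natCast_eq_natCast_iff x y p).mp hc
  rcases eq_or_lt_of_le hx2 with rfl | hxl
  · rcases eq_or_lt_of_le hy2 with h | hyl
    · omega
    · rw [Nat.mod_self, Nat.mod_eq_of_lt hyl] at h'; omega
  · rcases eq_or_lt_of_le hy2 with rfl | hyl
    · rw [Nat.mod_self, Nat.mod_eq_of_lt hxl] at h'; omega
    · rw [Nat.mod_eq_of_lt hxl, Nat.mod_eq_of_lt hyl] at h'; exact h'

lemma residue_cast {p n : ℕ} (hn : 1 ≤ n) :
    ((residue p n : ℕ) : ZMod p) = (n : ZMod p) := by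
  have he : residue p n = (n - 1) % p + 1 := rfl
  rw [he, Nat.cast_add, Nat.cast_one, ZMod.natCast_mod]
  have h2 : ((n - 1 : ℕ) : ZMod p) + 1 = ((n - 1 + 1 : ℕ) : ZMod p) := by push_cast; ring
  rw [h2, show n - 1 + 1 = n from by omega]

lemma succ_cast_iff {p b c : ℕ} (hp : 3 ≤ p) (hb1 : 1 ≤ b) (hb2 : b ≤ p)
    (hc1 : 1 ≤ c) (hc2 : c ≤ p) :
    c = residue p (b + 1) ↔ (c : ZMod p) = (b : ZMod p) + 1 := by
  constructor
  · rintro rfl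
    rw [residue_cast (by omega)]; push_cast; ring
  · intro hc
    have h1 : ((residue p (b+1) : ℕ) : ZMod p) = (c : ZMod p) := by
      rw [residue_cast (by omega), hc]; push_cast; ring
    have hrb := residue_bounds (p := p) (show 1 ≤ p by omega) (b+1)
    exact (cast_inj hrb.1 hrb.2 hc1 hc2 h1).symm

/-- Representative of `i : ZMod p` in `{1, …, p}`. -/
def toRep (p : ℕ) (i : ZMod p) : ℕ := if i.val = 0 then p else i.val

lemma toRep_bounds {p : ℕ} [NeZero p] (i : ZMod p) :
    1 ≤ toRep p i ∧ toRep p i ≤ p := by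
  have := ZMod.val_lt i
  unfold toRep; split_ifs <;> omega

lemma cast_toRep {p : ℕ} [NeZero p] (i : ZMod p) :
    ((toRep p i : ℕ) : ZMod p) = i := by
  unfold toRep
  split_ifs with hv
  · rw [ZMod.natCast_self]
    exact ((ZMod.val_eq_zero i).mp hv).symm
  · exact ZMod.natCast_rightInverse i

lemma toRep_cast {p b : ℕ} [NeZero p] (hb1 : 1 ≤ b) (hb2 : b ≤ p) :
    toRep p (b : ZMod p) = b := by
  have hbd := toRep_bounds (b : ZMod p)
  exact cast_inj hbd.1 hbd.2 hb1 hb2 (cast_toRep _)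

lemma adj_iff {h p : ℕ} (hh : 3 ≤ h) (hp : 3 ≤ p)
    (u v : {v : ℕ × ℕ // ∃ x, IsBoundaryEdge (cylPre h p) x ∧ v ∈ x}) :
    (boundaryGraph (cylPre h p)).Adj u v ↔
      u.1.1 = v.1.1 ∧
        (v.1.2 = residue p (u.1.2 + 1) ∨ u.1.2 = residue p (v.1.2 + 1)) := by
  constructor
  · rintro ⟨hne, x, hbd, hu, hv⟩
    rw [isBoundary_iff hh hp] at hbd
    obtain ⟨b, hb1, hb2, rfl | rfl⟩ := hbd <;>
      simp only [Vc, Finset.mem_insert, Finset.mem_singleton] at hu hv <;>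
      rcases hu with hu | hu <;> rcases hv with hv | hv <;>
      first
        | (exact absurd (Subtype.ext (hu.trans hv.symm)) hne)
        | (refine ⟨by rw [hu, hv], ?_⟩; rw [hu, hv]; simp)
  · rintro ⟨hcol, hor⟩
    have hu := (vertex_iff hh hp u.1).mp u.2
    have hv := (vertex_iff hh hp v.1).mp v.2
    rcases hor with hor | hor
    · have hne : u.1.2 ≠ v.1.2 := by
        rw [hor]; exact (succ_ne (by omega) hu.2.1 hu.2.2).symm
      refine ⟨fun hE => hne (by rw [hE]), Vc p u.1.1 u.1.2, ?_, by simp [Vc], ?_⟩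
      · rw [isBoundary_iff hh hp]
        refine ⟨u.1.2, hu.2.1, hu.2.2, ?_⟩
        rcases hu.1 with hc | hc
        · exact Or.inl (by rw [hc])
        · exact Or.inr (by rw [hc])
      · simp only [Vc, Finset.mem_insert, Finset.mem_singleton]
        right
        rw [Prod.ext_iff]
        exact ⟨hcol.symm, hor⟩
    · have hne : u.1.2 ≠ v.1.2 := by
        rw [hor]; exact succ_ne (by omega) hv.2.1 hv.2.2
      refine ⟨fun hE => hne (by rw [hE]), Vc p v.1.1 v.1.2, ?_, ?_, by simp [Vc]⟩
      · rw [isBoundary_iff hh hp]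
        refine ⟨v.1.2, hv.2.1, hv.2.2, ?_⟩
        rcases hv.1 with hc | hc
        · exact Or.inl (by rw [hc])
        · exact Or.inr (by rw [hc])
      · simp only [Vc, Finset.mem_insert, Finset.mem_singleton]
        right
        rw [Prod.ext_iff]
        exact ⟨hcol, hor⟩

end CylAux

/-- For `h, p ≥ 3`, the boundary graph of the cylinder `Cyl_{h,p}` is isomorphic
to the disjoint union of two cycle graphs of length `p`. -/
theorem cyl_boundary_iso (h p : ℕ) (hh : 3 ≤ h) (hp : 3 ≤ p) :
    Nonempty (boundaryGraph (cylPre h p) ≃g graphSum (cycGraph p) (cycGraph p)) := by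
  haveI : NeZero p := ⟨by omega⟩
  haveI : Fact (1 < p) := ⟨by omega⟩
  have hone : (1 : ZMod p) ≠ 0 := one_ne_zero
  let f : {v : ℕ × ℕ // ∃ x, IsBoundaryEdge (cylPre h p) x ∧ v ∈ x} →
      ZMod p ⊕ ZMod p :=
    fun v => if v.1.1 = 1 then Sum.inl (v.1.2 : ZMod p) else Sum.inr (v.1.2 : ZMod p)
  let g : ZMod p ⊕ ZMod p →
      {v : ℕ × ℕ // ∃ x, IsBoundaryEdge (cylPre h p) x ∧ v ∈ x} :=
    fun w => match w with
      | Sum.inl i => ⟨(1, CylAux.toRep p i), (CylAux.vertex_iff hh hp _).mpr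
          ⟨Or.inl rfl, (CylAux.toRep_bounds i).1, (CylAux.toRep_bounds i).2⟩⟩
      | Sum.inr i => ⟨(h, CylAux.toRep p i), (CylAux.vertex_iff hh hp _).mpr
          ⟨Or.inr rfl, (CylAux.toRep_bounds i).1, (CylAux.toRep_bounds i).2⟩⟩
  have hleft : Function.LeftInverse g f := by
    intro v
    have hv := (CylAux.vertex_iff hh hp v.1).mp v.2
    rcases hv.1 with hc | hc
    · have : f v = Sum.inl (v.1.2 : ZMod p) := by simp only [f, if_pos hc]
      rw [this]
      apply Subtype.ext
      show (1, CylAux.toRep p (v.1.2 : ZMod p)) = v.1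
      rw [CylAux.toRep_cast hv.2.1 hv.2.2, Prod.ext_iff]
      exact ⟨hc.symm, rfl⟩
    · have hne : v.1.1 ≠ 1 := by omega
      have : f v = Sum.inr (v.1.2 : ZMod p) := by simp only [f, if_neg hne]
      rw [this]
      apply Subtype.ext
      show (h, CylAux.toRep p (v.1.2 : ZMod p)) = v.1
      rw [CylAux.toRep_cast hv.2.1 hv.2.2, Prod.ext_iff]
      exact ⟨hc.symm, rfl⟩
  have hright : Function.RightInverse g f := by
    rintro (i | i)
    · show f ⟨(1, CylAux.toRep p i), _⟩ = Sum.inl i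
      simp only [f, if_pos rfl]
      rw [CylAux.cast_toRep]
    · show f ⟨(h, CylAux.toRep p i), _⟩ = Sum.inr i
      have hne : h ≠ 1 := by omega
      simp only [f, if_neg hne]
      rw [CylAux.cast_toRep]
  refine ⟨⟨⟨f, g, hleft, hright⟩, ?_⟩⟩
  intro u v
  show (graphSum (cycGraph p) (cycGraph p)).Adj (f u) (f v) ↔ _
  rw [CylAux.adj_iff hh hp]
  have hu := (CylAux.vertex_iff hh hp u.1).mp u.2
  have hv := (CylAux.vertex_iff hh hp v.1).mp v.2
  have key : ∀ b c : ℕ, 1 ≤ b → b ≤ p → 1 ≤ c → c ≤ p →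
      (c = residue p (b + 1) ↔ (c : ZMod p) - (b : ZMod p) = 1) := by
    intro b c hb1 hb2 hc1 hc2
    rw [CylAux.succ_cast_iff hp hb1 hb2 hc1 hc2, sub_eq_iff_eq_add, add_comm]
  rcases hu.1 with hcu | hcu <;> rcases hv.1 with hcv | hcv
  · have hfu : f u = Sum.inl (u.1.2 : ZMod p) := by simp only [f, if_pos hcu]
    have hfv : f v = Sum.inl (v.1.2 : ZMod p) := by simp only [f, if_pos hcv]
    rw [hfu, hfv]
    constructor
    · intro hadj
      have hcyc : (cycGraph p).Adj (u.1.2 : ZMod p) (v.1.2 : ZMod p) := by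
        cases hadj with
        | inl h' => exact h'
      obtain ⟨hne, hd | hd⟩ := hcyc
      · refine ⟨by rw [hcu, hcv], Or.inr ?_⟩
        exact (key v.1.2 u.1.2 hv.2.1 hv.2.2 hu.2.1 hu.2.2).mpr hd
      · refine ⟨by rw [hcu, hcv], Or.inl ?_⟩
        exact (key u.1.2 v.1.2 hu.2.1 hu.2.2 hv.2.1 hv.2.2).mpr hd
    · rintro ⟨-, hd | hd⟩
      · have hd' := (key u.1.2 v.1.2 hu.2.1 hu.2.2 hv.2.1 hv.2.2).mp hd
        refine Sum.LiftRel.inl ⟨?_, Or.inr hd'⟩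
        intro hE
        rw [hE, sub_self] at hd'
        exact hone hd'.symm
      · have hd' := (key v.1.2 u.1.2 hv.2.1 hv.2.2 hu.2.1 hu.2.2).mp hd
        refine Sum.LiftRel.inl ⟨?_, Or.inl hd'⟩
        intro hE
        rw [hE, sub_self] at hd'
        exact hone hd'.symm
  · have hfu : f u = Sum.inl (u.1.2 : ZMod p) := by simp only [f, if_pos hcu]
    have hfv : f v = Sum.inr (v.1.2 : ZMod p) := by
      simp only [f, if_neg (show v.1.1 ≠ 1 by omega)]
    rw [hfu, hfv]
    constructor
    · intro hadj; cases hadj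
    · rintro ⟨hcol, -⟩; exfalso; omega
  · have hfu : f u = Sum.inr (u.1.2 : ZMod p) := by
      simp only [f, if_neg (show u.1.1 ≠ 1 by omega)]
    have hfv : f v = Sum.inl (v.1.2 : ZMod p) := by simp only [f, if_pos hcv]
    rw [hfu, hfv]
    constructor
    · intro hadj; cases hadj
    · rintro ⟨hcol, -⟩; exfalso; omega
  · have hfu : f u = Sum.inr (u.1.2 : ZMod p) := by
      simp only [f, if_neg (show u.1.1 ≠ 1 by omega)]
    have hfv : f v = Sum.inr (v.1.2 : ZMod p) := by
      simp only [f, if_neg (show v.1.1 ≠ 1 by omega)]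
    rw [hfu, hfv]
    constructor
    · intro hadj
      have hcyc : (cycGraph p).Adj (u.1.2 : ZMod p) (v.1.2 : ZMod p) := by
        cases hadj with
        | inr h' => exact h'
      obtain ⟨hne, hd | hd⟩ := hcyc
      · refine ⟨by rw [hcu, hcv], Or.inr ?_⟩
        exact (key v.1.2 u.1.2 hv.2.1 hv.2.2 hu.2.1 hu.2.2).mpr hd
      · refine ⟨by rw [hcu, hcv], Or.inl ?_⟩
        exact (key u.1.2 v.1.2 hu.2.1 hu.2.2 hv.2.1 hv.2.2).mpr hd
    · rintro ⟨-, hd | hd⟩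
      · have hd' := (key u.1.2 v.1.2 hu.2.1 hu.2.2 hv.2.1 hv.2.2).mp hd
        refine Sum.LiftRel.inr ⟨?_, Or.inr hd'⟩
        intro hE
        rw [hE, sub_self] at hd'
        exact hone hd'.symm
      · have hd' := (key v.1.2 u.1.2 hv.2.1 hv.2.2 hu.2.1 hu.2.2).mp hd
        refine Sum.LiftRel.inr ⟨?_, Or.inl hd'⟩
        intro hE
        rw [hE, sub_self] at hd'
        exact hone hd'.symm

end TDL
end
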